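/- arXiv:hep-th/9407191 — 4 statements merged into one kernel-verified Lean document; each statement's English description precedes it below -/
import Mathlib

section
/- For every nonnegative integer n, the alternating sum over all integers r of (-1)^r q^{r(3r+1)/2} times the Gaussian binomial coefficient [n choose ⌊(n-3r)/2⌋]_q equals 1 (as polynomials in q). -/
open PowerSeries Finset

/-- `∏_{j=1}^m (1 - q^{a j})`, the q-Pochhammer `(q^a; q^a)_m` as a power series in `q = X`. -/
noncomputable def qpochA (a m : ℕ) : PowerSeries ℚ :=
  ∏ j ∈ Finset.range m, (1 - (PowerSeries.X : PowerSeries ℚ) ^ (a * (j + 1)))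

/-- `(q)_m = ∏_{j=1}^m (1 - q^j)`. -/
noncomputable def qpoch (m : ℕ) : PowerSeries ℚ := qpochA 1 m

/-- Gaussian binomial `[N choose M]_{q^a}`: `(q^a)_N / ((q^a)_M (q^a)_{N-M})` when
`0 ≤ M ≤ N`, and `0` otherwise. -/
noncomputable def qbinomA (a : ℕ) (N M : ℤ) : PowerSeries ℚ :=
  if 0 ≤ M ∧ M ≤ N then
    qpochA a N.toNat * (qpochA a M.toNat)⁻¹ * (qpochA a (N - M).toNat)⁻¹
  else 0

/-- Gaussian binomial `[N choose M]_q`. -/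
noncomputable def qbinom (N M : ℤ) : PowerSeries ℚ := qbinomA 1 N M

lemma qpoch_zero : qpoch 0 = 1 := by simp [qpoch, qpochA]

lemma qpoch_succ (m : ℕ) : qpoch (m + 1) = qpoch m * (1 - X ^ (m + 1)) := by
  simp [qpoch, qpochA, Finset.prod_range_succ]

lemma constantCoeff_qpoch (m : ℕ) : constantCoeff (R := ℚ) (qpoch m) = 1 := by
  induction m with
  | zero => simp [qpoch_zero]
  | succ k ih => rw [qpoch_succ]; simp [ih]

lemma qpoch_ne (m : ℕ) : constantCoeff (R := ℚ) (qpoch m) ≠ 0 := by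
  rw [constantCoeff_qpoch]; norm_num

lemma qpoch_ne_zero (m : ℕ) : qpoch m ≠ 0 := fun h => qpoch_ne m (by rw [h]; simp)

lemma qpoch_mul_inv (m : ℕ) : qpoch m * (qpoch m)⁻¹ = 1 :=
  PowerSeries.mul_inv_cancel _ (qpoch_ne m)

lemma qpoch_inv_succ (k : ℕ) : (qpoch k)⁻¹ = (1 - X ^ (k + 1)) * (qpoch (k + 1))⁻¹ := by
  apply mul_left_cancel₀ (qpoch_ne_zero k)
  rw [qpoch_mul_inv, ← mul_assoc, ← qpoch_succ, qpoch_mul_inv]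

lemma qbinom_eq (N M : ℤ) : qbinom N M =
    if 0 ≤ M ∧ M ≤ N then
      qpoch N.toNat * (qpoch M.toNat)⁻¹ * (qpoch (N - M).toNat)⁻¹
    else 0 := rfl

lemma qbinom_of_not {N M : ℤ} (h : ¬(0 ≤ M ∧ M ≤ N)) : qbinom N M = 0 := by
  rw [qbinom_eq, if_neg h]

lemma qbinom_zero {N : ℤ} (h : 0 ≤ N) : qbinom N 0 = 1 := by
  rw [qbinom_eq, if_pos ⟨le_refl 0, h⟩]
  simp only [Int.toNat_zero, qpoch_zero, sub_zero]
  rw [inv_one, mul_one, qpoch_mul_inv]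

lemma qbinom_self {N : ℤ} (h : 0 ≤ N) : qbinom N N = 1 := by
  rw [qbinom_eq, if_pos ⟨h, le_refl N⟩]
  simp only [sub_self, Int.toNat_zero, qpoch_zero]
  rw [inv_one, mul_one, qpoch_mul_inv]

lemma pascal_keyA (n a : ℕ) (h1 : 1 ≤ a) (h2 : a ≤ n) :
    qpoch (n+1) * (qpoch a)⁻¹ * (qpoch (n+1-a))⁻¹ =
      qpoch n * (qpoch a)⁻¹ * (qpoch (n-a))⁻¹
      + X ^ (n+1-a) * (qpoch n * (qpoch (a-1))⁻¹ * (qpoch (n+1-a))⁻¹) := by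
  have e1 : n - a + 1 = n + 1 - a := by omega
  have e2 : a - 1 + 1 = a := by omega
  have hx : (X : PowerSeries ℚ) ^ (n+1) = X ^ (n+1-a) * X ^ a := by
    rw [← pow_add]; congr 1; omega
  rw [qpoch_succ n, qpoch_inv_succ (n-a), e1, qpoch_inv_succ (a-1), e2, hx]
  ring

lemma pascal_keyB (n a : ℕ) (h1 : 1 ≤ a) (h2 : a ≤ n) :
    qpoch (n+1) * (qpoch a)⁻¹ * (qpoch (n+1-a))⁻¹ =
      X ^ a * (qpoch n * (qpoch a)⁻¹ * (qpoch (n-a))⁻¹)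
      + qpoch n * (qpoch (a-1))⁻¹ * (qpoch (n+1-a))⁻¹ := by
  have e1 : n - a + 1 = n + 1 - a := by omega
  have e2 : a - 1 + 1 = a := by omega
  have hx : (X : PowerSeries ℚ) ^ (n+1) = X ^ (n+1-a) * X ^ a := by
    rw [← pow_add]; congr 1; omega
  rw [qpoch_succ n, qpoch_inv_succ (n-a), e1, qpoch_inv_succ (a-1), e2, hx]
  ring

lemma pascalA (n : ℕ) (m : ℤ) :
    qbinom ((n:ℤ)+1) m = qbinom n m + X ^ ((n:ℤ)+1-m).toNat * qbinom n (m-1) := by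
  rcases lt_trichotomy m 0 with hm | hm | hm
  · rw [qbinom_of_not (by omega), qbinom_of_not (by omega), qbinom_of_not (by omega)]
    simp
  · subst hm
    rw [qbinom_zero (by positivity), qbinom_zero (by positivity),
      qbinom_of_not (by omega)]
    simp
  · rcases lt_trichotomy m ((n:ℤ)+1) with h2 | h2 | h2
    · have hmn : (m.toNat : ℤ) = m := Int.toNat_of_nonneg (le_of_lt hm)
      set a := m.toNat with ha
      have h1a : 1 ≤ a := by omega
      have h2a : a ≤ n := by omega
      rw [qbinom_eq, qbinom_eq, qbinom_eq, if_pos (by omega), if_pos (by omega),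
        if_pos (by omega)]
      have t1 : ((n:ℤ)+1).toNat = n + 1 := by omega
      have t2 : ((n:ℤ)+1-m).toNat = n+1-a := by omega
      have t3 : ((n:ℤ)-m).toNat = n - a := by omega
      have t4 : (m-1).toNat = a - 1 := by omega
      have t5 : ((n:ℤ)).toNat = n := by omega
      have t6 : ((n:ℤ) - (m-1)).toNat = n+1-a := by omega
      rw [t1, t2, t3, t4, t5, t6, ← ha]
      exact pascal_keyA n a h1a h2a
    · subst h2
      rw [qbinom_self (by positivity), qbinom_of_not (by omega)]
      have : ((n:ℤ)+1-((n:ℤ)+1)).toNat = 0 := by omega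
      rw [this, pow_zero, add_sub_cancel_right, qbinom_self (by positivity)]
      simp
    · rw [qbinom_of_not (by omega), qbinom_of_not (by omega), qbinom_of_not (by omega)]
      simp

lemma pascalB (n : ℕ) (m : ℤ) :
    qbinom ((n:ℤ)+1) m = X ^ m.toNat * qbinom n m + qbinom n (m-1) := by
  rcases lt_trichotomy m 0 with hm | hm | hm
  · rw [qbinom_of_not (by omega), qbinom_of_not (by omega), qbinom_of_not (by omega)]
    simp
  · subst hm
    rw [qbinom_zero (by positivity), qbinom_zero (by positivity),
      qbinom_of_not (by omega)]
    simp
  · rcases lt_trichotomy m ((n:ℤ)+1) with h2 | h2 | h2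
    · have hmn : (m.toNat : ℤ) = m := Int.toNat_of_nonneg (le_of_lt hm)
      set a := m.toNat with ha
      have h1a : 1 ≤ a := by omega
      have h2a : a ≤ n := by omega
      rw [qbinom_eq, qbinom_eq, qbinom_eq, if_pos (by omega), if_pos (by omega),
        if_pos (by omega)]
      have t1 : ((n:ℤ)+1).toNat = n + 1 := by omega
      have t3 : ((n:ℤ)-m).toNat = n - a := by omega
      have t4 : (m-1).toNat = a - 1 := by omega
      have t5 : ((n:ℤ)).toNat = n := by omega
      have t2 : ((n:ℤ)+1-m).toNat = n+1-a := by omega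
      have t6 : ((n:ℤ) - (m-1)).toNat = n+1-a := by omega
      rw [t1, t2, t3, t4, t5, t6, ← ha]
      exact pascal_keyB n a h1a h2a
    · subst h2
      rw [qbinom_self (by positivity), qbinom_of_not (by omega)]
      rw [add_sub_cancel_right, qbinom_self (by positivity)]
      simp
    · rw [qbinom_of_not (by omega), qbinom_of_not (by omega), qbinom_of_not (by omega)]
      simp

noncomputable def term (n : ℕ) (r : ℤ) : PowerSeries ℚ :=
  (PowerSeries.C (R := ℚ)) ((-1 : ℚ) ^ r) *
    (PowerSeries.X : PowerSeries ℚ) ^ (r * (3 * r + 1) / 2).toNat *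
    qbinom n (Int.fdiv ((n : ℤ) - 3 * r) 2)

noncomputable def Fx (n : ℕ) (r : ℤ) : PowerSeries ℚ :=
  if ((n:ℤ) + 1 - 3*r) % 2 = 0 then
    (PowerSeries.C (R := ℚ)) ((-1 : ℚ) ^ r) *
      (PowerSeries.X : PowerSeries ℚ) ^ (r * (3*r+1)/2 + ((n:ℤ)+1-3*r)/2).toNat *
      qbinom n (((n:ℤ)+1-3*r)/2)
  else 0

lemma omega_fact (r : ℤ) :
    ∃ w : ℤ, 0 ≤ w ∧ r*(3*r+1) = 2*w ∧ (r+1)*(3*(r+1)+1) = 2*(w+3*r+2) := by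
  rcases Int.even_or_odd r with ⟨s, hs⟩ | ⟨s, hs⟩
  · refine ⟨s*(6*s+1), ?_, by subst hs; ring, by subst hs; ring⟩
    rcases le_or_gt 0 s with h | h
    · exact mul_nonneg h (by linarith)
    · nlinarith [mul_nonneg (by omega : (0:ℤ) ≤ -s) (by omega : (0:ℤ) ≤ -(6*s+1))]
  · refine ⟨(2*s+1)*(3*s+2), ?_, by subst hs; ring, by subst hs; ring⟩
    rcases le_or_gt 0 s with h | h
    · exact mul_nonneg (by linarith) (by linarith)
    · nlinarith [mul_nonneg (by omega : (0:ℤ) ≤ -(2*s+1)) (by omega : (0:ℤ) ≤ -(3*s+2))]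

lemma step (n : ℕ) (r : ℤ) : term (n+1) r = term n r + (Fx n r - Fx n (r+1)) := by
  obtain ⟨w, hw0, hw1, hw2⟩ := omega_fact r
  have hωr : r*(3*r+1)/2 = w := by rw [hw1]; omega
  have hωr1 : (r+1)*(3*(r+1)+1)/2 = w+3*r+2 := by rw [hw2]; omega
  have hcast : ((n+1:ℕ):ℤ) = (n:ℤ)+1 := by push_cast; ring
  rcases Int.even_or_odd ((n:ℤ) + 1 - 3*r) with ⟨m, hm⟩ | ⟨m, hm⟩
  · -- n+1-3r even, = m + m
    have hf1 : Int.fdiv ((↑(n+1):ℤ) - 3*r) 2 = m := by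
      rw [Int.fdiv_eq_ediv_of_nonneg _ (by norm_num)]; push_cast; omega
    have hf2 : Int.fdiv ((n:ℤ) - 3*r) 2 = m - 1 := by
      rw [Int.fdiv_eq_ediv_of_nonneg _ (by norm_num)]; omega
    have hc1 : ((n:ℤ)+1-3*r) % 2 = 0 := by omega
    have hc2 : ¬ (((n:ℤ)+1-3*(r+1)) % 2 = 0) := by omega
    have hd1 : ((n:ℤ)+1-3*r)/2 = m := by omega
    unfold term Fx
    rw [hf1, hf2, if_pos hc1, if_neg hc2, sub_zero, hd1, hωr, hcast, pascalB n m]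
    by_cases hm0 : 0 ≤ m
    · have e : (w + m).toNat = w.toNat + m.toNat := by omega
      rw [e, pow_add]; ring
    · rw [qbinom_of_not (fun h => hm0 h.1)]; ring
  · -- n+1-3r odd, = 2m+1
    have hf1 : Int.fdiv ((↑(n+1):ℤ) - 3*r) 2 = m := by
      rw [Int.fdiv_eq_ediv_of_nonneg _ (by norm_num)]; push_cast; omega
    have hf2 : Int.fdiv ((n:ℤ) - 3*r) 2 = m := by
      rw [Int.fdiv_eq_ediv_of_nonneg _ (by norm_num)]; omega
    have hc1 : ¬ (((n:ℤ)+1-3*r) % 2 = 0) := by omega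
    have hc2 : ((n:ℤ)+1-3*(r+1)) % 2 = 0 := by omega
    have hd2 : ((n:ℤ)+1-3*(r+1))/2 = m - 1 := by omega
    have hsign : ((-1:ℚ)^(r+1)) = (-1:ℚ)^r * (-1) := zpow_add_one₀ (by norm_num) r
    unfold term Fx
    rw [hf1, hf2, if_neg hc1, if_pos hc2, zero_sub, hd2, hωr, hωr1, hcast, pascalA n m,
      hsign, map_mul]
    by_cases hm0 : 0 ≤ m + 3*r + 1
    · have e : ((n:ℤ)+1-m).toNat = (m+3*r+1).toNat := by omega
      have e2 : (w + 3*r + 2 + (m-1)).toNat = w.toNat + (m+3*r+1).toNat := by omega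
      have hC : (PowerSeries.C (R := ℚ)) (-1 : ℚ) = -1 := by
        rw [map_neg, map_one]
      rw [e, e2, pow_add, hC]; ring
    · have hz : qbinom n (m-1) = 0 := qbinom_of_not (by omega)
      rw [hz]; ring

lemma term_support (n : ℕ) : (Function.support (term n)).Finite := by
  apply Set.Finite.subset (Finset.finite_toSet (Finset.Icc (-(n:ℤ)-1) (n:ℤ)))
  intro r hr
  simp only [Finset.coe_Icc, Set.mem_Icc]
  by_contra hcon
  apply hr
  have h0 : qbinom n (Int.fdiv ((n:ℤ) - 3*r) 2) = 0 := by
    apply qbinom_of_not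
    rw [Int.fdiv_eq_ediv_of_nonneg _ (by norm_num)]
    omega
  simp [term, h0]

lemma Fx_support (n : ℕ) : (Function.support (Fx n)).Finite := by
  apply Set.Finite.subset (Finset.finite_toSet (Finset.Icc (-(n:ℤ)-2) ((n:ℤ)+2)))
  intro r hr
  simp only [Finset.coe_Icc, Set.mem_Icc]
  by_contra hcon
  apply hr
  unfold Fx
  by_cases hp : ((n:ℤ)+1-3*r) % 2 = 0
  · rw [if_pos hp, qbinom_of_not (by omega)]; simp
  · rw [if_neg hp]

lemma base : ∑ᶠ r : ℤ, term 0 r = 1 := by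
  rw [finsum_eq_single _ 0 (by
    intro x hx
    unfold term
    rw [qbinom_of_not (by
      rw [Int.fdiv_eq_ediv_of_nonneg _ (by norm_num)]
      push_cast
      omega)]
    simp)]
  unfold term
  have h2 : Int.fdiv (((0:ℕ):ℤ) - 3*0) 2 = 0 := by
    rw [Int.fdiv_eq_ediv_of_nonneg _ (by norm_num)]; norm_num
  rw [h2]
  norm_num
  rw [qbinom_zero (by norm_num)]


/-- `∑_{r ∈ ℤ} (-1)^r q^{r(3r+1)/2} [n choose ⌊(n-3r)/2⌋]_q = 1`. -/
theorem pentagonal_truncated (n : ℕ) :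
    (∑ᶠ r : ℤ, (PowerSeries.C (R := ℚ)) ((-1 : ℚ) ^ r) *
        (PowerSeries.X : PowerSeries ℚ) ^ (r * (3 * r + 1) / 2).toNat *
        qbinom n (Int.fdiv ((n : ℤ) - 3 * r) 2)) = 1 := by

  have key : ∀ N : ℕ, ∑ᶠ r : ℤ, term N r = 1 := by
    intro N
    induction N with
    | zero => exact base
    | succ k ih =>
      have hF := Fx_support k
      have hF' : (Function.support fun r : ℤ => Fx k (r+1)).Finite := by
        rw [show (fun r : ℤ => Fx k (r+1)) = (Fx k) ∘ (fun r : ℤ => r + 1) from rfl,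
          Function.support_comp_eq_preimage]
        exact hF.preimage (fun a _ b _ h => by omega)
      have hsub : (Function.support fun r : ℤ => Fx k r - Fx k (r+1)).Finite :=
        (hF.union hF').subset (Function.support_sub _ _)
      have hshift : ∑ᶠ r : ℤ, Fx k (r+1) = ∑ᶠ r : ℤ, Fx k r := by
        have h := finsum_comp_equiv (Equiv.addRight (1:ℤ)) (f := Fx k)
        simpa [Equiv.coe_addRight] using h
      calc ∑ᶠ r : ℤ, term (k+1) r
          = ∑ᶠ r : ℤ, (term k r + (Fx k r - Fx k (r+1))) := finsum_congr (step k)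
        _ = (∑ᶠ r : ℤ, term k r) + ∑ᶠ r : ℤ, (Fx k r - Fx k (r+1)) :=
            finsum_add_distrib (term_support k) hsub
        _ = 1 + ((∑ᶠ r : ℤ, Fx k r) - ∑ᶠ r : ℤ, Fx k (r+1)) := by
            rw [ih, finsum_sub_distrib hF hF']
        _ = 1 := by rw [hshift]; ring
  exact key n
end

section
/- As formal power series in q with |q|<1, ∏_{n≥1, n≡±2 (mod 5)} (1-q^n)^{-1} = ∑_{r≥0} q^{r²+r}/(q)_r. -/
open PowerSeries Finset

namespace RR2

abbrev PS := PowerSeries ℚ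

/-- Gaussian binomial via Pascal recursion. -/
noncomputable def G (a : ℕ) : ℕ → ℕ → PS
  | 0, 0 => 1
  | 0, _+1 => 0
  | _+1, 0 => 1
  | n+1, k+1 => G a n (k+1) + X ^ (a * (n - k)) * G a n k

@[simp] lemma G_zero_right (a n : ℕ) : G a n 0 = 1 := by cases n <;> rfl

lemma G_succ (a n k : ℕ) :
    G a (n+1) (k+1) = G a n (k+1) + X ^ (a * (n - k)) * G a n k := rfl

lemma G_eq_zero (a : ℕ) : ∀ n k : ℕ, n < k → G a n k = 0 := by
  intro n
  induction n with
  | zero => intro k hk; match k, hk with | k+1, _ => rfl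
  | succ n ih =>
    intro k hk
    match k, hk with
    | k+1, hk =>
      rw [G_succ, ih (k+1) (by omega), ih k (by omega)]
      ring

@[simp] lemma G_diag (a : ℕ) : ∀ n, G a n n = 1 := by
  intro n
  induction n with
  | zero => rfl
  | succ n ih =>
    rw [G_succ, ih, G_eq_zero a n (n+1) (by omega)]
    simp

lemma qpochA_zero (a : ℕ) : qpochA a 0 = 1 := by simp [qpochA]

lemma qpochA_succ (a m : ℕ) :
    qpochA a (m+1) = qpochA a m * (1 - (X : PS) ^ (a * (m+1))) := by
  rw [qpochA, qpochA, prod_range_succ]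

lemma constantCoeff_qpochA (a m : ℕ) (ha : 0 < a) :
    constantCoeff (R := ℚ) (qpochA a m) = 1 := by
  induction m with
  | zero => simp [qpochA_zero]
  | succ m ih =>
    rw [qpochA_succ, map_mul, ih, map_sub, map_one, map_pow, constantCoeff_X,
      zero_pow (by positivity), sub_zero, one_mul]

lemma qpochA_ne_zero (a m : ℕ) (ha : 0 < a) : qpochA a m ≠ 0 := by
  intro h
  have := constantCoeff_qpochA a m ha
  rw [h, map_zero] at this
  exact one_ne_zero this.symm

/-- Product formula for the Gaussian binomial. -/
lemma Gprod (a : ℕ) : ∀ n k : ℕ, k ≤ n →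
    G a n k * qpochA a k * qpochA a (n - k) = qpochA a n := by
  intro n
  induction n with
  | zero =>
    intro k hk
    interval_cases k
    simp [qpochA_zero]
  | succ n ih =>
    intro k hk
    match k with
    | 0 => simp [qpochA_zero]
    | k+1 =>
      rcases eq_or_lt_of_le hk with h | h
      · rw [h]; simp [qpochA_zero]
      · have hk1 : k + 1 ≤ n := by omega
        have hkn : k ≤ n := by omega
        have e1 : n + 1 - (k+1) = (n - (k+1)) + 1 := by omega
        have e2 : n - (k + 1) + 1 = n - k := by omega
        rw [G_succ, e1, qpochA_succ a (n - (k+1)), add_mul, add_mul]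
        have t1 : G a n (k+1) * qpochA a (k+1) * (qpochA a (n - (k+1)) *
            (1 - X ^ (a * (n - (k+1) + 1)))) =
            qpochA a n * (1 - X ^ (a * (n - k))) := by
          rw [← mul_assoc, ih (k+1) hk1, e2]
        have t2 : X ^ (a * (n - k)) * G a n k * qpochA a (k+1) *
            (qpochA a (n - (k+1)) * (1 - X ^ (a * (n - (k+1) + 1)))) =
            X ^ (a * (n - k)) * (1 - X ^ (a * (k+1))) * qpochA a n := by
          have e6 : qpochA a (n - k) = qpochA a (n - (k+1)) *
              (1 - X ^ (a * (n - (k+1) + 1))) := by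
            rw [← qpochA_succ, e2]
          rw [qpochA_succ a k, ← ih k hkn, e6]; ring
        rw [t1, t2, qpochA_succ a n]
        have e5 : a * (n - k) + a * (k + 1) = a * (n + 1) := by
          have : (n - k) + (k + 1) = n + 1 := by omega
          calc a * (n - k) + a * (k + 1) = a * ((n-k) + (k+1)) := by ring
          _ = a * (n+1) := by rw [this]
        calc qpochA a n * (1 - X ^ (a * (n - k))) + X ^ (a * (n - k)) * (1 - X ^ (a * (k + 1))) * qpochA a n
            = qpochA a n * (1 - X ^ (a * (n - k)) * X ^ (a * (k+1))) := by ring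
        _ = qpochA a n * (1 - X ^ (a * (n + 1))) := by rw [← pow_add, e5]

lemma G_symm (a : ℕ) (ha : 0 < a) (n k : ℕ) (hk : k ≤ n) :
    G a n k = G a n (n - k) := by
  have h1 := Gprod a n k hk
  have h2 := Gprod a n (n-k) (by omega)
  have e : n - (n - k) = k := by omega
  rw [e] at h2
  have hne : qpochA a k * qpochA a (n - k) ≠ 0 :=
    mul_ne_zero (qpochA_ne_zero a k ha) (qpochA_ne_zero a (n-k) ha)
  have : G a n k * (qpochA a k * qpochA a (n-k)) =
      G a n (n-k) * (qpochA a k * qpochA a (n-k)) := by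
    calc G a n k * (qpochA a k * qpochA a (n-k))
        = G a n k * qpochA a k * qpochA a (n-k) := by ring
      _ = qpochA a n := h1
      _ = G a n (n-k) * qpochA a (n-k) * qpochA a k := h2.symm
      _ = G a n (n-k) * (qpochA a k * qpochA a (n-k)) := by ring
  exact mul_right_cancel₀ hne this

/-- Second Pascal rule. -/
lemma G_succ' (a : ℕ) (ha : 0 < a) (n k : ℕ) :
    G a (n+1) (k+1) = X ^ (a * (k+1)) * G a n (k+1) + G a n k := by
  rcases lt_trichotomy (k+1) (n+1) with h | h | h
  · have h1 : k + 1 ≤ n := by omega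
    obtain ⟨u, hu⟩ : ∃ u, n = k + 1 + u := ⟨n - (k+1), by omega⟩
    have s1 : G a (n+1) (k+1) = G a (n+1) (u+1) := by
      have e : n + 1 - (k+1) = u + 1 := by omega
      rw [G_symm a ha (n+1) (k+1) (by omega), e]
    have s2 : G a n (u+1) = G a n k := by
      have e : n - (u+1) = k := by omega
      rw [G_symm a ha n (u+1) (by omega), e]
    have s3 : G a n u = G a n (k+1) := by
      have e : n - u = k + 1 := by omega
      rw [G_symm a ha n u (by omega), e]
    have e4 : a * (n - u) = a * (k+1) := by
      have e : n - u = k + 1 := by omega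
      rw [e]
    rw [s1, G_succ, s2, s3, e4]
    ring
  · have hk : k = n := by omega
    subst hk
    rw [G_diag, G_eq_zero a k (k+1) (by omega), G_diag]
    ring
  · rw [G_eq_zero a (n+1) (k+1) h, G_eq_zero a n (k+1) (by omega),
      G_eq_zero a n k (by omega)]
    ring

/-- `G` with integer second index (zero for negative index). -/
noncomputable def Gz (a n : ℕ) (k : ℤ) : PS :=
  if 0 ≤ k then G a n k.toNat else 0

lemma Gz_ofNat (a n : ℕ) (k : ℕ) : Gz a n (k : ℤ) = G a n k := by
  simp [Gz]

lemma Gz_neg (a n : ℕ) {k : ℤ} (h : k < 0) : Gz a n k = 0 := by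
  simp [Gz, not_le.mpr h]

lemma Gz_big (a n : ℕ) {k : ℤ} (h : (n : ℤ) < k) : Gz a n k = 0 := by
  rcases le_or_gt 0 k with h0 | h0
  · rw [Gz, if_pos h0]
    exact G_eq_zero a n k.toNat (by omega)
  · exact Gz_neg a n h0

lemma Gz_diag (a n : ℕ) : Gz a n (n : ℤ) = 1 := by
  rw [Gz_ofNat, G_diag]

/-- First Pascal rule, integer index. -/
lemma P1z (a n : ℕ) (k : ℤ) :
    Gz a (n+1) k = Gz a n k + X ^ (a * ((n + 1 : ℤ) - k).toNat) * Gz a n (k-1) := by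
  rcases lt_trichotomy k 0 with h | h | h
  · rw [Gz_neg a _ h, Gz_neg a _ h, Gz_neg a _ (by omega)]
    ring
  · subst h
    have hneg : ((0:ℤ) - 1) < 0 := by norm_num
    rw [Gz_neg a n hneg]
    simp [Gz]
  · obtain ⟨s, rfl⟩ : ∃ s : ℕ, k = (s : ℤ) + 1 := ⟨(k-1).toNat, by omega⟩
    have e1 : ((s : ℤ) + 1 - 1) = (s : ℤ) := by ring
    rw [e1]
    have e2 : ((s : ℤ) + 1) = ((s + 1 : ℕ) : ℤ) := by push_cast; ring
    rw [e2, Gz_ofNat, Gz_ofNat, Gz_ofNat]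
    rcases le_or_gt (s+1) (n+1) with hs | hs
    · have e3 : ((n + 1 : ℤ) - ((s+1 : ℕ) : ℤ)).toNat = n - s := by omega
      rw [e3, G_succ]
    · rw [G_eq_zero a (n+1) (s+1) hs, G_eq_zero a n (s+1) (by omega),
        G_eq_zero a n s (by omega)]
      ring

/-- Second Pascal rule, integer index. -/
lemma P2z (a n : ℕ) (ha : 0 < a) (k : ℤ) :
    Gz a (n+1) k = X ^ (a * k.toNat) * Gz a n k + Gz a n (k-1) := by
  rcases lt_trichotomy k 0 with h | h | h
  · rw [Gz_neg a _ h, Gz_neg a _ h, Gz_neg a _ (by omega)]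
    ring
  · subst h
    have hneg : ((0:ℤ) - 1) < 0 := by norm_num
    rw [Gz_neg a n hneg]
    simp [Gz]
  · obtain ⟨s, rfl⟩ : ∃ s : ℕ, k = (s : ℤ) + 1 := ⟨(k-1).toNat, by omega⟩
    have e1 : ((s : ℤ) + 1 - 1) = (s : ℤ) := by ring
    rw [e1]
    have e2 : ((s : ℤ) + 1) = ((s + 1 : ℕ) : ℤ) := by push_cast; ring
    rw [e2, Gz_ofNat, Gz_ofNat, Gz_ofNat]
    have e3 : ((s+1 : ℕ) : ℤ).toNat = s + 1 := by omega
    rw [e3, G_succ' a ha]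

/-- the theta exponent `(5j²+3j)/2`. -/
def sigma (j : ℤ) : ℕ := ((5 * j * j + 3 * j) / 2).toNat

lemma sigma_cast (j : ℤ) : (sigma j : ℤ) * 2 = 5 * j * j + 3 * j := by
  have hpar : ∃ t : ℤ, 5 * j * j + 3 * j = 2 * t := by
    rcases Int.even_or_odd j with ⟨t, rfl⟩ | ⟨t, rfl⟩
    · exact ⟨10 * t * t + 3 * t, by ring⟩
    · exact ⟨10 * t * t + 13 * t + 4, by ring⟩
  have hnn : 0 ≤ 5 * j * j + 3 * j := by
    rcases le_or_gt 0 j with h | h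
    · positivity
    · have h1 : j ≤ -1 := by omega
      have : 5 * j * j + 3 * j = j * (5 * j + 3) := by ring
      nlinarith [mul_pos (by omega : (0:ℤ) < -j) (by omega : (0:ℤ) < -(5*j+3))]
  obtain ⟨t, ht⟩ := hpar
  rw [sigma, ht]
  omega

lemma sigma_nonneg_gt (j : ℤ) (hd : (j : ℤ) ≠ 0) : 1 ≤ sigma j := by
  have := sigma_cast j
  rcases lt_or_gt_of_ne hd with h | h
  · nlinarith
  · nlinarith

lemma sigma_succ (j : ℤ) : (sigma (j+1) : ℤ) = (sigma j : ℤ) + 5 * j + 4 := by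
  have h1 := sigma_cast j
  have h2 := sigma_cast (j+1)
  have : 5 * (j+1) * (j+1) + 3 * (j+1) = 5 * j * j + 3 * j + (10 * j + 8) := by ring
  omega

/-- `|j| > d` implies `sigma j > d`. -/
lemma sigma_large {j : ℤ} {d : ℕ} (h : (d : ℤ) < |j|) : (d : ℕ) < sigma j := by
  have hc := sigma_cast j
  rcases abs_cases j with ⟨h1, h2⟩ | ⟨h1, h2⟩
  · have : (d : ℤ) < j := by omega
    nlinarith
  · have : j < -(d : ℤ) := by omega
    nlinarith

/-- Homogeneous finite `q`-binomial (Cauchy) identity. -/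
lemma dagger (a s t : ℕ) : ∀ m : ℕ,
    ∏ i ∈ range m, ((X:PS)^s - X^(a*i+t)) =
    ∑ k ∈ range (m+1), (-1:PS)^k * X^(a * Nat.choose k 2 + s*(m-k) + t*k) * G a m k := by
  intro m
  induction m with
  | zero => simp
  | succ m ih =>
    have hGm1 : G a m (m+1) = 0 := G_eq_zero a m (m+1) (by omega)
    set E : ℕ → ℕ := fun k => a * Nat.choose k 2 + s*(m+1-k) + t*k with hE
    set e : ℕ → ℕ := fun k => a * Nat.choose k 2 + s*(m-k) + t*k with he
    set u : ℕ → PS := fun i => (-1:PS)^i * X^(E (i+1)) * G a m (i+1) with hu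
    set v : ℕ → PS := fun i => (-1:PS)^i * X^(E (i+1) + a*(m-i)) * G a m i with hv
    have key : ∑ k ∈ range (m+2), (-1:PS)^k * X^(E k) * G a (m+1) k
        = (- ∑ i ∈ range (m+1), u i) + ((- ∑ i ∈ range (m+1), v i) + X^(E 0)) := by
      rw [Finset.sum_range_succ' (fun k => (-1:PS)^k * X^(E k) * G a (m+1) k) (m+1)]
      have main : ∑ k ∈ range (m+1), (-1:PS)^(k+1) * X^(E (k+1)) * G a (m+1) (k+1)
          = ∑ i ∈ range (m+1), (-(u i) + -(v i)) := by
        apply Finset.sum_congr rfl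
        intro i _
        rw [G_succ, pow_succ, pow_add, hu, hv]
        ring
      rw [main, Finset.sum_add_distrib, Finset.sum_neg_distrib, Finset.sum_neg_distrib]
      simp only [pow_zero, G_zero_right, one_mul, mul_one]
      ring
    rw [prod_range_succ, ih, key]
    have first : ∑ k ∈ range (m+1), (-1:PS)^k * X^(e k) * G a m k * X^s
        = (- ∑ i ∈ range (m+1), u i) + X^(E 0) := by
      have lhs_eq : ∀ k ∈ range (m+1),
          (-1:PS)^k * X^(e k) * G a m k * X^s = (-1:PS)^k * X^(E k) * G a m k := by
        intro k hk
        rw [mem_range] at hk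
        have h1 : m + 1 - k = (m - k) + 1 := by omega
        have h2 : E k = e k + s := by
          show a * Nat.choose k 2 + s*(m+1-k) + t*k = a * Nat.choose k 2 + s*(m-k) + t*k + s
          rw [h1]; ring
        rw [h2, pow_add]; ring
      rw [Finset.sum_congr rfl lhs_eq,
        Finset.sum_range_succ' (fun k => (-1:PS)^k * X^(E k) * G a m k) m,
        Finset.sum_range_succ (fun i => u i) m]
      have main2 : ∑ k ∈ range m, (-1:PS)^(k+1) * X^(E (k+1)) * G a m (k+1)
          = ∑ k ∈ range m, -(u k) := by
        apply Finset.sum_congr rfl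
        intro i _
        rw [pow_succ, hu]
        ring
      rw [main2, Finset.sum_neg_distrib, hu]
      show _ = -((∑ i ∈ range m, u i) + (-1:PS)^m * X^(E (m+1)) * G a m (m+1)) + X^(E 0)
      rw [hGm1]
      simp only [pow_zero, G_zero_right, one_mul, mul_one, mul_zero, add_zero]
      rfl
    have second : ∑ k ∈ range (m+1), (-1:PS)^k * X^(e k) * G a m k * X^(a*m+t)
        = ∑ i ∈ range (m+1), v i := by
      apply Finset.sum_congr rfl
      intro k hk
      rw [mem_range] at hk
      obtain ⟨w, hw⟩ : ∃ w, m = k + w := ⟨m - k, by omega⟩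
      have h3 : E (k+1) + a*(m-k) = e k + (a*m+t) := by
        show a * Nat.choose (k+1) 2 + s*(m+1-(k+1)) + t*(k+1) + a*(m-k)
          = a * Nat.choose k 2 + s*(m-k) + t*k + (a*m+t)
        rw [Nat.choose_succ_succ, Nat.choose_one_right]
        subst hw
        have h4 : k + w + 1 - (k+1) = w := by omega
        have h5 : k + w - k = w := by omega
        rw [h4, h5]; ring
      rw [hv]
      show _ = (-1:PS)^k * X^(E (k+1) + a*(m-k)) * G a m k
      rw [h3, pow_add]; ring
    rw [mul_sub, Finset.sum_mul, Finset.sum_mul, first, second]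
    ring

lemma choose2 : ∀ k : ℕ, 2 * Nat.choose k 2 = k * (k - 1)
  | 0 => rfl
  | (k+1) => by
      rw [Nat.choose_succ_succ, Nat.choose_one_right, Nat.mul_add, choose2 k]
      cases k with
      | zero => rfl
      | succ w => simp only [Nat.succ_sub_one]; ring

lemma choose2z (k : ℕ) : (Nat.choose k 2 : ℤ) * 2 = (k : ℤ) * ((k:ℤ) - 1) := by
  cases k with
  | zero => simp
  | succ w =>
    have h := choose2 (w+1)
    have h' : ((Nat.choose (w+1) 2 : ℤ)) * 2 = ((w+1) * w : ℕ) := by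
      have h'' : (w+1) - 1 = w := rfl
      rw [h''] at h
      have : Nat.choose (w+1) 2 * 2 = (w+1) * w := by linarith
      exact_mod_cast this
    push_cast at h' ⊢
    linear_combination h'

lemma expcalc (N k : ℕ) (hN : 1 ≤ N) (hk : k ≤ 2*N) :
    5 * Nat.choose k 2 + (5*N-4)*(2*N-k) + 0*k
      = (5*Nat.choose N 2 + (5*N-4)*N) + sigma ((k:ℤ) - N) := by
  have hk2 := choose2z k
  have hN2 := choose2z N
  have hs := sigma_cast ((k:ℤ) - N)
  have hs4 : (((5*N-4 : ℕ)) : ℤ) = 5*(N:ℤ) - 4 := by omega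
  have h2 : (5 * (Nat.choose k 2 : ℤ) + ((5*N-4 : ℕ):ℤ)*(2*(N:ℤ)-k) + 0*k) * 2
      = ((5*(Nat.choose N 2:ℤ) + ((5*N-4:ℕ):ℤ)*N) + (sigma ((k:ℤ) - N) : ℤ)) * 2 := by
    rw [hs4]
    linear_combination (5:ℤ)*hk2 - 5*hN2 - hs
  have h3 : (5 * (Nat.choose k 2 : ℤ) + ((5*N-4 : ℕ):ℤ)*(2*(N:ℤ)-k) + 0*k)
      = ((5*(Nat.choose N 2:ℤ) + ((5*N-4:ℕ):ℤ)*N) + (sigma ((k:ℤ) - N) : ℤ)) := by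
    linarith
  have e1 : ((2*N - k : ℕ) : ℤ) = 2*(N:ℤ) - k := by omega
  zify
  rw [e1]
  exact h3

/-- The finite Jacobi-type identity for the second Rogers–Ramanujan function. -/
lemma star (N : ℕ) (hN : 1 ≤ N) :
    ∏ i ∈ range N, ((1 - (X:PS)^(5*i+1)) * (1 - X^(5*i+4))) =
    ∑ k ∈ range (2*N+1), (-1:PS)^(k+N) * X^(sigma ((k:ℤ) - N)) * G 5 (2*N) k := by
  have hd := dagger 5 (5*N-4) 0 (2*N)
  set s : ℕ := 5*N - 4 with hs
  set E : ℕ := 5*Nat.choose N 2 + s*N with hE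
  -- LHS of hd
  have hsplit : ∏ i ∈ range (2*N), ((X:PS)^s - X^(5*i+0))
      = (∏ i ∈ range N, ((X:PS)^s - X^(5*i+0))) *
        ∏ i ∈ range N, ((X:PS)^s - X^(5*(N+i)+0)) := by
    have : 2*N = N + N := by omega
    rw [this, Finset.prod_range_add]
  have hP1 : ∏ i ∈ range N, ((X:PS)^s - X^(5*i+0))
      = (-1:PS)^N * X^(5*Nat.choose N 2) * ∏ i ∈ range N, (1 - X^(5*i+1)) := by
    have step : ∀ i ∈ range N, ((X:PS)^s - X^(5*i+0))
        = (-1) * (X^(5*i) * (1 - X^(5*(N-1-i)+1))) := by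
      intro i hi
      rw [mem_range] at hi
      have he : 5*i + (5*(N-1-i)+1) = s := by omega
      rw [mul_sub, mul_one, ← pow_add, he]
      ring
    rw [Finset.prod_congr rfl step]
    rw [Finset.prod_mul_distrib, Finset.prod_mul_distrib, Finset.prod_const]
    rw [Finset.prod_pow_eq_pow_sum]
    have hsum : ∑ i ∈ range N, 5*i = 5*Nat.choose N 2 := by
      have g1 := Finset.sum_range_id_mul_two N
      have g2 := choose2 N
      have : ∑ i ∈ range N, 5*i = 5 * ∑ i ∈ range N, i := by
        rw [Finset.mul_sum]
      omega
    rw [hsum]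
    have hrefl : ∏ i ∈ range N, (1 - (X:PS)^(5*(N-1-i)+1))
        = ∏ i ∈ range N, (1 - X^(5*i+1)) :=
      Finset.prod_range_reflect (fun j => 1 - (X:PS)^(5*j+1)) N
    rw [hrefl, Finset.card_range]
    ring
  have hP2 : ∏ i ∈ range N, ((X:PS)^s - X^(5*(N+i)+0))
      = X^(s*N) * ∏ i ∈ range N, (1 - X^(5*i+4)) := by
    have step : ∀ i ∈ range N, ((X:PS)^s - X^(5*(N+i)+0))
        = X^s * (1 - X^(5*i+4)) := by
      intro i hi
      have he : s + (5*i+4) = 5*(N+i)+0 := by omega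
      rw [mul_sub, mul_one, ← pow_add, he]
    rw [Finset.prod_congr rfl step, Finset.prod_mul_distrib, Finset.prod_const,
      Finset.card_range, ← pow_mul]
  -- RHS of hd
  have hR : ∑ k ∈ range (2*N+1), (-1:PS)^k * X^(5 * Nat.choose k 2 + s*(2*N-k) + 0*k) * G 5 (2*N) k
      = ((-1:PS)^N * X^E) * ∑ k ∈ range (2*N+1), (-1:PS)^(k+N) * X^(sigma ((k:ℤ) - N)) * G 5 (2*N) k := by
    rw [Finset.mul_sum]
    apply Finset.sum_congr rfl
    intro k hk
    rw [mem_range] at hk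
    have he := expcalc N k hN (by omega)
    rw [hs] at *
    rw [he]
    have hsgn : ((-1:PS))^N * (-1:PS)^(k+N) = (-1:PS)^k := by
      rw [← pow_add]
      have : N + (k + N) = k + 2*N := by omega
      rw [this, pow_add, pow_mul]
      norm_num
    rw [pow_add]
    calc (-1:PS)^k * (X^E * X^(sigma ((k:ℤ)-N))) * G 5 (2*N) k
        = ((-1:PS)^N * (-1:PS)^(k+N)) * (X^E * X^(sigma ((k:ℤ)-N))) * G 5 (2*N) k := by rw [hsgn]
      _ = (-1:PS)^N * X^E * ((-1:PS)^(k+N) * X^(sigma ((k:ℤ)-N)) * G 5 (2*N) k) := by ring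
  rw [hsplit, hP1, hP2] at hd
  rw [hR] at hd
  have hfact : ((-1:PS)^N * X^(5*Nat.choose N 2) * ∏ i ∈ range N, (1 - X^(5*i+1))) *
      (X^(s*N) * ∏ i ∈ range N, (1 - X^(5*i+4)))
      = ((-1:PS)^N * X^E) * ∏ i ∈ range N, ((1 - X^(5*i+1)) * (1 - X^(5*i+4))) := by
    rw [Finset.prod_mul_distrib, hE, pow_add]
    ring
  rw [hfact] at hd
  have hne : ((-1:PS)^N * X^E) ≠ 0 := by
    apply mul_ne_zero
    · exact pow_ne_zero _ (neg_ne_zero.mpr one_ne_zero)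
    · exact pow_ne_zero _ X_ne_zero
  exact mul_left_cancel₀ hne hd

lemma P1z' (n : ℕ) (k : ℤ) :
    Gz 1 (n+1) k = Gz 1 n k + X^(((n:ℤ) + 1 - k).toNat) * Gz 1 n (k-1) := by
  simpa using P1z 1 n k

lemma P2z' (n : ℕ) (k : ℤ) :
    Gz 1 (n+1) k = X^(k.toNat) * Gz 1 n k + Gz 1 n (k-1) := by
  simpa using P2z 1 n one_pos k

/-- Schur polynomial, sum side. -/
noncomputable def CC (n : ℕ) : PS := ∑ r ∈ range (n+1), X^(r^2+r) * G 1 (n-r) r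

lemma CC_ext (n M : ℕ) (h : n + 1 ≤ M) :
    CC n = ∑ r ∈ range M, X^(r^2+r) * G 1 (n-r) r := by
  rw [CC]
  apply Finset.sum_subset (by simpa using h)
  intro r _ hr
  rw [mem_range, not_lt] at hr
  have e : n - r = 0 := by omega
  rw [e, G_eq_zero 1 0 r (by omega), mul_zero]

lemma CC_rec (n : ℕ) : CC (n+2) = CC (n+1) + X^(n+2) * CC n := by
  have e2 : CC (n+2) = ∑ r ∈ range (n+3), X^(r^2+r) * G 1 (n+2-r) r := CC_ext _ _ (by omega)
  have e1 : CC (n+1) = ∑ r ∈ range (n+3), X^(r^2+r) * G 1 (n+1-r) r := CC_ext _ _ (by omega)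
  have e0 : CC n = ∑ r ∈ range (n+2), X^(r^2+r) * G 1 (n-r) r := CC_ext _ _ (by omega)
  rw [e2, e1, e0]
  rw [Finset.sum_range_succ' (fun r => (X:PS)^(r^2+r) * G 1 (n+2-r) r) (n+2),
      Finset.sum_range_succ' (fun r => (X:PS)^(r^2+r) * G 1 (n+1-r) r) (n+2)]
  have split : ∀ i ∈ range (n+2),
      (X:PS)^((i+1)^2+(i+1)) * G 1 (n+2-(i+1)) (i+1)
      = X^((i+1)^2+(i+1)) * G 1 (n+1-(i+1)) (i+1)
        + X^(n+2) * (X^(i^2+i) * G 1 (n-i) i) := by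
    intro i hi
    rw [mem_range] at hi
    rcases le_or_gt i n with hin | hin
    · have g1 : n + 2 - (i+1) = (n - i) + 1 := by omega
      have g2 : n + 1 - (i+1) = n - i := by omega
      rw [g1, g2, G_succ]
      rcases le_or_gt (2*i) n with h2i | h2i
      · have g3 : (i+1)^2+(i+1) + 1*((n-i) - i) = (n+2) + (i^2+i) := by
          have hsq : (i+1)^2 = i^2+2*i+1 := by ring
          rw [hsq]
          generalize i^2 = q
          omega
        rw [mul_add, ← mul_assoc, ← pow_add, g3]
        simp only [pow_add]
        ring
      · have hz : G 1 (n-i) i = 0 := G_eq_zero 1 (n-i) i (by omega)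
        have hz2 : G 1 (n-i) (i+1) = 0 := G_eq_zero 1 (n-i) (i+1) (by omega)
        rw [hz, hz2]
        ring
    · have g1 : n + 2 - (i+1) = 0 := by omega
      have g2 : n + 1 - (i+1) = 0 := by omega
      have g3 : n - i = 0 := by omega
      rw [g1, g2, g3, G_eq_zero 1 0 (i+1) (by omega), G_eq_zero 1 0 i (by omega)]
      ring
  rw [Finset.sum_congr rfl split, Finset.sum_add_distrib, ← Finset.mul_sum]
  norm_num
  ring

/-- Schur polynomial, theta side, with `2J+1` terms centred at `J`. -/
noncomputable def TT (J n k : ℕ) : PS :=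
  (-1:PS)^(k+J) * X^(sigma ((k:ℤ)-J)) * Gz 1 (n+1) (((n:ℤ) - 5*((k:ℤ)-J))/2)

noncomputable def DD (J n : ℕ) : PS := ∑ k ∈ range (2*J+1), TT J n k

/-- telescoping remainder for the recurrence at `n+2`. -/
noncomputable def hfun (J n k : ℕ) : PS :=
  if ((n:ℤ)+2+J+k) % 2 = 0 then
    (-1:PS)^(k+J) * X^(sigma ((k:ℤ)-J) + (((n:ℤ)+2 - 5*((k:ℤ)-J))/2).toNat)
      * Gz 1 (n+1) (((n:ℤ)+2 - 5*((k:ℤ)-J))/2)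
  else 0

lemma step_k (J n k : ℕ) :
    TT J (n+2) k = TT J (n+1) k + X^(n+2) * TT J n k
      + (hfun J n k - hfun J n (k+1)) := by
  simp only [TT, hfun]
  push_cast
  set j : ℤ := (k:ℤ) - (J:ℤ) with hjdef
  have hj2 : ((k:ℤ) + 1 - (J:ℤ)) = j + 1 := by rw [hjdef]; ring
  rw [hj2]
  have e23 : n+2+1 = n+3 := by omega
  have e12 : n+1+1 = n+2 := by omega
  rw [e23, e12]
  set c : PS := (-1:PS)^(k+J) with hc
  have hc1 : (-1:PS)^(k+1+J) = -c := by
    rw [hc]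
    have : k+1+J = (k+J)+1 := by omega
    rw [this, pow_succ]
    ring
  rw [hc1]
  by_cases hpar : ((n:ℤ)+2+J+k) % 2 = 0
  · -- even class
    rw [if_pos hpar, if_neg (by omega)]
    set m : ℤ := ((n:ℤ)+2 - 5*j)/2 with hmdef
    have hm : 2*m = (n:ℤ)+2-5*j := by omega
    have i1 : ((n:ℤ)+1 - 5*j)/2 = m - 1 := by omega
    have i0 : ((n:ℤ) - 5*j)/2 = m - 1 := by omega
    rw [i1, i0]
    have hP2 := P2z' (n+2) m
    rw [e23] at hP2
    have hP1 := P1z' (n+1) m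
    rw [e12] at hP1
    push_cast at hP1
    have e1 : ((n:ℤ)+1+1 - m) = ((n:ℤ)+2 - m) := by ring
    rw [e1] at hP1
    rw [hP2, hP1]
    have hmain : (X:PS)^(m.toNat) * (X^(((n:ℤ)+2 - m).toNat) * Gz 1 (n+1) (m-1))
        = X^(n+2) * Gz 1 (n+1) (m-1) := by
      rcases lt_or_ge m 0 with h0 | h0
      · rw [Gz_neg 1 (n+1) (by omega : m - 1 < 0)]
        ring
      · rcases le_or_gt m ((n:ℤ)+2) with h2 | h2
        · rw [← mul_assoc, ← pow_add]
          congr 2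
          omega
        · rw [Gz_big 1 (n+1) (by omega : ((n+1:ℕ):ℤ) < m - 1)]
          ring
    rw [pow_add]
    calc c * X^(sigma j) * (X^(m.toNat) * (Gz 1 (n+1) m
            + X^(((n:ℤ)+2 - m).toNat) * Gz 1 (n+1) (m-1)) + Gz 1 (n+2) (m-1))
        = c * X^(sigma j) * Gz 1 (n+2) (m-1)
          + c * X^(sigma j) * (X^(m.toNat) * (X^(((n:ℤ)+2 - m).toNat) * Gz 1 (n+1) (m-1)))
          + c * (X^(sigma j) * X^(m.toNat)) * Gz 1 (n+1) m := by ring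
      _ = _ := by rw [hmain]; ring
  · -- odd class
    rw [if_neg hpar, if_pos (by omega)]
    set m : ℤ := ((n:ℤ)+2 - 5*j)/2 with hmdef
    have hm : 2*m + 1 = (n:ℤ)+2-5*j := by omega
    have i1 : ((n:ℤ)+1 - 5*j)/2 = m := by omega
    have i0 : ((n:ℤ) - 5*j)/2 = m - 1 := by omega
    have i2 : ((n:ℤ)+2 - 5*(j+1))/2 = m - 2 := by omega
    rw [i1, i0, i2]
    have hP1 := P1z' (n+2) m
    rw [e23] at hP1
    push_cast at hP1
    have e1 : ((n:ℤ)+2+1 - m) = ((n:ℤ)+3 - m) := by ring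
    rw [e1] at hP1
    have hP2 := P2z' (n+1) (m-1)
    rw [e12] at hP2
    have e2 : (m - 1 - 1 : ℤ) = m - 2 := by ring
    rw [e2] at hP2
    rw [hP1, hP2]
    have hmain : (X:PS)^(((n:ℤ)+3 - m).toNat) * (X^((m-1).toNat) * Gz 1 (n+1) (m-1))
        = X^(n+2) * Gz 1 (n+1) (m-1) := by
      rcases lt_or_ge m 1 with h0 | h0
      · rw [Gz_neg 1 (n+1) (by omega : m - 1 < 0)]
        ring
      · rcases le_or_gt m ((n:ℤ)+3) with h2 | h2
        · rw [← mul_assoc, ← pow_add]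
          congr 2
          omega
        · rw [Gz_big 1 (n+1) (by omega : ((n+1:ℕ):ℤ) < m - 1)]
          ring
    have hrem : (X:PS)^(sigma j) * X^(((n:ℤ)+3 - m).toNat) * Gz 1 (n+1) (m-2)
        = X^(sigma (j+1) + (m-2).toNat) * Gz 1 (n+1) (m-2) := by
      rcases lt_or_ge m 2 with h0 | h0
      · rw [Gz_neg 1 (n+1) (by omega : m - 2 < 0)]
        ring
      · rcases le_or_gt m ((n:ℤ)+3) with h2 | h2
        · rw [← pow_add]
          congr 2
          have hs := sigma_succ j
          omega
        · rw [Gz_big 1 (n+1) (by omega : ((n+1:ℕ):ℤ) < m - 2)]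
          ring
    calc c * X^(sigma j) * (Gz 1 (n+2) m
            + X^(((n:ℤ)+3 - m).toNat) * (X^((m-1).toNat) * Gz 1 (n+1) (m-1) + Gz 1 (n+1) (m-2)))
        = c * X^(sigma j) * Gz 1 (n+2) m
          + c * (X^(((n:ℤ)+3 - m).toNat) * (X^((m-1).toNat) * Gz 1 (n+1) (m-1)))
            * X^(sigma j)
          + c * (X^(sigma j) * X^(((n:ℤ)+3 - m).toNat) * Gz 1 (n+1) (m-2)) := by ring
      _ = _ := by rw [hmain, hrem]; ring

lemma DD_rec (J n : ℕ) (hn : n + 2 ≤ 5*J + 1) :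
    DD J (n+2) = DD J (n+1) + X^(n+2) * DD J n := by
  have hsum : ∀ k ∈ range (2*J+1),
      TT J (n+2) k = (TT J (n+1) k + X^(n+2) * TT J n k)
        + (hfun J n k - hfun J n (k+1)) := by
    intro k _
    exact step_k J n k
  rw [DD, Finset.sum_congr rfl hsum, Finset.sum_add_distrib, Finset.sum_add_distrib,
    Finset.sum_range_sub' (hfun J n) (2*J+1), ← Finset.mul_sum, ← DD, ← DD]
  have h0 : hfun J n 0 = 0 := by
    rw [hfun]
    split_ifs with hpar
    · rw [Gz_big 1 (n+1) (by omega : ((n+1:ℕ):ℤ) < ((n:ℤ)+2 - 5*(((0:ℕ):ℤ)-J))/2)]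
      ring
    · rfl
  have h1 : hfun J n (2*J+1) = 0 := by
    rw [hfun]
    split_ifs with hpar
    · rw [Gz_neg 1 (n+1) (by omega : ((n:ℤ)+2 - 5*((((2*J+1):ℕ):ℤ)-J))/2 < 0)]
      ring
    · rfl
  rw [h0, h1]
  ring

lemma DD_small (J n : ℕ) (hn : n ≤ 1) : DD J n = 1 := by
  rw [DD, Finset.sum_eq_single J]
  · rw [TT]
    have e0 : ((J:ℤ) - J) = 0 := by ring
    rw [e0]
    have e1 : ((n:ℤ) - 5*0)/2 = 0 := by omega
    rw [e1]
    have e2 : sigma 0 = 0 := by norm_num [sigma]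
    rw [e2]
    have e3 : Gz 1 (n+1) 0 = 1 := by
      rw [Gz]
      simp
    rw [e3]
    have e4 : (-1:PS)^(J+J) = 1 := by
      rw [← two_mul, pow_mul]
      norm_num
    rw [e4]
    ring
  · intro k hk hne
    rw [TT]
    rcases lt_or_gt_of_ne (show (k:ℤ) - J ≠ 0 by omega) with h | h
    · rw [Gz_big 1 (n+1) (by omega : ((n+1:ℕ):ℤ) < ((n:ℤ) - 5*((k:ℤ)-J))/2)]
      ring
    · rw [Gz_neg 1 (n+1) (by omega : ((n:ℤ) - 5*((k:ℤ)-J))/2 < 0)]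
      ring
  · intro hJ
    exact absurd (by simp; omega : J ∈ range (2*J+1)) hJ

lemma CC_eq_DD (J : ℕ) : ∀ n, n ≤ 5*J + 1 → CC n = DD J n := by
  intro n
  induction n using Nat.strong_induction_on with
  | _ n ih =>
    match n with
    | 0 =>
      intro _
      rw [DD_small J 0 (by omega)]
      rw [CC]
      simp
    | 1 =>
      intro _
      rw [DD_small J 1 (by omega), CC]
      rw [Finset.sum_range_succ, Finset.sum_range_succ]
      simp [G_eq_zero 1 0 1 (by omega)]
    | (m+2) =>
      intro h
      rw [CC_rec, DD_rec J m (by omega), ih m (by omega) (by omega),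
        ih (m+1) (by omega) (by omega)]

/-- congruence mod `X^(d+1)`. -/
def MD (d : ℕ) (f g : PS) : Prop := (X:PS)^(d+1) ∣ (f - g)

lemma MD_refl (d : ℕ) (f : PS) : MD d f f := by simp [MD]

lemma MD_symm {d : ℕ} {f g : PS} (h : MD d f g) : MD d g f := by
  rw [MD] at *
  have : g - f = -(f - g) := by ring
  rw [this]
  exact Dvd.dvd.neg_right h

lemma MD_trans {d : ℕ} {f g h : PS} (h1 : MD d f g) (h2 : MD d g h) : MD d f h := by
  rw [MD] at *
  have : f - h = (f - g) + (g - h) := by ring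
  rw [this]
  exact dvd_add h1 h2

lemma MD_add {d : ℕ} {f g f' g' : PS} (h : MD d f g) (h' : MD d f' g') :
    MD d (f + f') (g + g') := by
  rw [MD] at *
  have : f + f' - (g + g') = (f - g) + (f' - g') := by ring
  rw [this]
  exact dvd_add h h'

lemma MD_mul {d : ℕ} {f g f' g' : PS} (h : MD d f g) (h' : MD d f' g') :
    MD d (f * f') (g * g') := by
  rw [MD] at *
  have : f * f' - g * g' = f * (f' - g') + (f - g) * g' := by ring
  rw [this]
  exact dvd_add (Dvd.dvd.mul_left h' f) (Dvd.dvd.mul_right h g')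

lemma MD_sum {d : ℕ} {ι : Type*} {s : Finset ι} {f g : ι → PS}
    (h : ∀ i ∈ s, MD d (f i) (g i)) :
    MD d (∑ i ∈ s, f i) (∑ i ∈ s, g i) := by
  rw [MD, ← Finset.sum_sub_distrib]
  exact Finset.dvd_sum h

lemma MD_of_dvd_dvd {d : ℕ} {f g : PS} (h1 : (X:PS)^(d+1) ∣ f) (h2 : (X:PS)^(d+1) ∣ g) :
    MD d f g := dvd_sub h1 h2

lemma MD_coeff {d : ℕ} {f g : PS} (h : MD d f g) {i : ℕ} (hi : i ≤ d) :
    coeff (R := ℚ) i f = coeff (R := ℚ) i g := by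
  rw [MD] at h
  rw [X_pow_dvd_iff] at h
  have := h i (by omega)
  rw [map_sub, sub_eq_zero] at this
  exact this

lemma MD_cancel {d : ℕ} {u f g : PS} (hu : constantCoeff (R := ℚ) u ≠ 0)
    (h : MD d (u * f) (u * g)) : MD d f g := by
  rw [MD] at *
  have hui : u⁻¹ * u = 1 := PowerSeries.inv_mul_cancel u hu
  have : f - g = u⁻¹ * (u * f - u * g) := by
    calc f - g = (u⁻¹ * u) * f - (u⁻¹ * u) * g := by rw [hui]; ring
      _ = u⁻¹ * (u * f - u * g) := by ring
  rw [this]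
  exact Dvd.dvd.mul_left h u⁻¹

lemma MD_inv {d : ℕ} {u v : PS} (hu : constantCoeff (R := ℚ) u ≠ 0)
    (hv : constantCoeff (R := ℚ) v ≠ 0) (h : MD d u v) : MD d u⁻¹ v⁻¹ := by
  rw [MD] at *
  have hu1 : u * u⁻¹ = 1 := PowerSeries.mul_inv_cancel u hu
  have hv1 : v * v⁻¹ = 1 := PowerSeries.mul_inv_cancel v hv
  have key : u⁻¹ - v⁻¹ = u⁻¹ * v⁻¹ * (v - u) := by
    calc u⁻¹ - v⁻¹ = u⁻¹ * (v * v⁻¹) - (u * u⁻¹) * v⁻¹ := by rw [hu1, hv1]; ring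
      _ = u⁻¹ * v⁻¹ * (v - u) := by ring
  rw [key]
  have : (X:PS)^(d+1) ∣ v - u := by
    have e : v - u = -(u - v) := by ring
    rw [e]
    exact Dvd.dvd.neg_right h
  exact Dvd.dvd.mul_left this _

lemma MD_prod_one {d : ℕ} {ι : Type*} (s : Finset ι) (e : ι → ℕ)
    (he : ∀ i ∈ s, d + 1 ≤ e i) :
    MD d (∏ i ∈ s, (1 - (X:PS)^(e i))) 1 := by
  classical
  induction s using Finset.induction_on with
  | empty => simp [MD_refl]
  | insert _ _ hnot ih =>
    rename_i a s'
    rw [Finset.prod_insert hnot]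
    have h1 : MD d (1 - (X:PS)^(e a)) 1 := by
      rw [MD]
      have : (1 - (X:PS)^(e a)) - 1 = -(X^(e a)) := by ring
      rw [this]
      exact Dvd.dvd.neg_right (pow_dvd_pow X (he a (Finset.mem_insert_self a s')))
    have h2 := ih (fun i hi => he i (Finset.mem_insert_of_mem hi))
    have := MD_mul h1 h2
    rw [one_mul] at this
    exact this

lemma MD_P {d a : ℕ} (ha : 0 < a) {m : ℕ} (hm : d ≤ m) :
    MD d (qpochA a m) (qpochA a d) := by
  obtain ⟨t, rfl⟩ : ∃ t, m = d + t := ⟨m - d, by omega⟩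
  have hsplit : qpochA a (d + t) = qpochA a d * ∏ j ∈ range t, (1 - (X:PS)^(a*(d+j+1))) := by
    rw [qpochA, qpochA, Finset.prod_range_add]
  rw [hsplit]
  have := MD_mul (MD_refl d (qpochA a d))
    (MD_prod_one (range t) (fun j => a*(d+j+1)) (fun j _ => by nlinarith))
  rw [mul_one] at this
  exact this

lemma MD_G_mul_poch {d : ℕ} (a n k : ℕ) (ha : 0 < a) (h1 : k ≤ n) (h2 : d ≤ n - k) :
    MD d (G a n k * qpochA a k) 1 := by
  apply MD_cancel (u := qpochA a (n - k)) (by rw [constantCoeff_qpochA a _ ha]; norm_num)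
  have e : qpochA a (n-k) * (G a n k * qpochA a k) = qpochA a n := by
    rw [← Gprod a n k h1]; ring
  rw [e, mul_one]
  exact MD_trans (MD_P ha (by omega)) (MD_symm (MD_P ha h2))

lemma MD_Pd_mul_G {d : ℕ} (a n k : ℕ) (ha : 0 < a) (h1 : k ≤ n) (h2 : d ≤ n - k)
    (h3 : d ≤ k) : MD d (qpochA a d * G a n k) 1 := by
  apply MD_cancel (u := qpochA a k) (by rw [constantCoeff_qpochA a _ ha]; norm_num)
  have e : qpochA a k * (qpochA a d * G a n k) = qpochA a d * (G a n k * qpochA a k) := by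
    ring
  rw [e, mul_one]
  have step1 := MD_mul (MD_refl d (qpochA a d)) (MD_G_mul_poch a n k ha h1 h2)
  rw [mul_one] at step1
  exact MD_trans step1 (MD_symm (MD_P ha h3))

lemma MD_prod_exps (d : ℕ) (S U : Finset ℕ)
    (h : S.filter (fun n => n ≤ d) = U.filter (fun n => n ≤ d)) :
    MD d (∏ n ∈ S, (1 - (X:PS)^n)) (∏ n ∈ U, (1 - (X:PS)^n)) := by
  classical
  have hS := (Finset.prod_filter_mul_prod_filter_not S (fun n => n ≤ d)
    (fun n => 1 - (X:PS)^n)).symm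
  have hU := (Finset.prod_filter_mul_prod_filter_not U (fun n => n ≤ d)
    (fun n => 1 - (X:PS)^n)).symm
  rw [hS, hU, h]
  apply MD_mul (MD_refl _ _)
  have t1 : MD d (∏ n ∈ S.filter (fun n => ¬ n ≤ d), (1 - (X:PS)^n)) 1 :=
    MD_prod_one _ _ (fun i hi => by
      rw [Finset.mem_filter] at hi
      omega)
  have t2 : MD d (∏ n ∈ U.filter (fun n => ¬ n ≤ d), (1 - (X:PS)^n)) 1 :=
    MD_prod_one _ _ (fun i hi => by
      rw [Finset.mem_filter] at hi
      omega)
  exact MD_trans t1 (MD_symm t2)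

lemma qpoch_eq (m : ℕ) : qpoch m = qpochA 1 m := rfl

noncomputable def Theta (J : ℕ) : PS :=
  ∑ k ∈ range (2*J+1), (-1:PS)^(k+J) * X^(sigma ((k:ℤ)-J))

lemma ccf (n : ℕ) (hn : 1 ≤ n) : constantCoeff (R := ℚ) (1 - (X:PS)^n) = 1 := by
  rw [map_sub, map_one, map_pow, constantCoeff_X, zero_pow (by omega), sub_zero]

lemma left_chain (d : ℕ) :
    MD d (qpoch d * ∏ n ∈ (Finset.range (d + 1)).filter (fun n => n % 5 = 2 ∨ n % 5 = 3),
      ((1 - (PowerSeries.X : PowerSeries ℚ) ^ n)⁻¹)) (Theta (2*d+2)) := by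
  set J := 2*d+2 with hJ
  set F := (Finset.range (d + 1)).filter (fun n => n % 5 = 2 ∨ n % 5 = 3) with hF
  set S1 := (Finset.Icc 1 d).filter (fun n => ¬(n % 5 = 2 ∨ n % 5 = 3)) with hS1
  have qd : qpoch d = (∏ n ∈ (Finset.Icc 1 d).filter (fun n => n % 5 = 2 ∨ n % 5 = 3),
      (1 - (X:PS)^n)) * ∏ n ∈ S1, (1 - (X:PS)^n) := by
    rw [Finset.prod_filter_mul_prod_filter_not]
    rw [qpoch_eq, qpochA]
    have himg : (Finset.range d).image (fun j => j + 1) = Finset.Icc 1 d := by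
      ext x
      simp only [Finset.mem_image, Finset.mem_range, Finset.mem_Icc]
      constructor
      · rintro ⟨j, hj, rfl⟩; omega
      · intro h; exact ⟨x - 1, by omega, by omega⟩
    rw [← himg, Finset.prod_image (by intro a _ b _ h; simp only at h; omega)]
    apply Finset.prod_congr rfl
    intro j _
    norm_num
  have hsets : (Finset.Icc 1 d).filter (fun n => n % 5 = 2 ∨ n % 5 = 3) = F := by
    rw [hF]
    ext n
    simp only [Finset.mem_filter, Finset.mem_Icc, Finset.mem_range]
    constructor
    · rintro ⟨⟨h1, h2⟩, h3⟩
      exact ⟨by omega, h3⟩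
    · rintro ⟨h1, h3⟩
      refine ⟨⟨by omega, by omega⟩, h3⟩
  have left1 : qpoch d * ∏ n ∈ F, ((1 - (X:PS)^n)⁻¹) = ∏ n ∈ S1, (1 - (X:PS)^n) := by
    rw [qd, hsets, mul_comm (∏ n ∈ F, (1 - (X:PS)^n)) _, mul_assoc,
      ← Finset.prod_mul_distrib]
    have : ∀ n ∈ F, (1 - (X:PS)^n) * (1 - (X:PS)^n)⁻¹ = 1 := by
      intro n hn
      rw [hF, Finset.mem_filter] at hn
      exact PowerSeries.mul_inv_cancel _ (by rw [ccf n (by omega)]; norm_num)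
    rw [Finset.prod_congr rfl this, Finset.prod_const_one, mul_one]
  rw [left1]
  -- compare with the exponent set U
  set A5 := (Finset.range d).image (fun j => 5*(j+1)) with hA5
  set B1 := (Finset.range J).image (fun i => 5*i+1) with hB1
  set B4 := (Finset.range J).image (fun i => 5*i+4) with hB4
  have left2 : MD d (∏ n ∈ S1, (1 - (X:PS)^n)) (∏ n ∈ (A5 ∪ B1) ∪ B4, (1 - (X:PS)^n)) := by
    apply MD_prod_exps
    ext n
    simp only [hS1, hA5, hB1, hB4, Finset.mem_filter, Finset.mem_Icc, Finset.mem_union,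
      Finset.mem_image, Finset.mem_range]
    constructor
    · rintro ⟨⟨⟨h1, h2⟩, h3⟩, h4⟩
      rcases (show n % 5 = 0 ∨ n % 5 = 1 ∨ n % 5 = 4 by omega) with h | h | h
      · exact ⟨Or.inl (Or.inl ⟨n/5 - 1, by omega, by omega⟩), h4⟩
      · exact ⟨Or.inl (Or.inr ⟨n/5, by omega, by omega⟩), h4⟩
      · exact ⟨Or.inr ⟨n/5, by omega, by omega⟩, h4⟩
    · rintro ⟨(⟨j, hj, rfl⟩ | ⟨i, hi, rfl⟩) | ⟨i, hi, rfl⟩, h4⟩ <;>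
        refine ⟨⟨⟨by omega, by omega⟩, by omega⟩, by omega⟩
  have left3 : ∏ n ∈ (A5 ∪ B1) ∪ B4, (1 - (X:PS)^n)
      = qpochA 5 d * ∏ i ∈ range J, ((1 - (X:PS)^(5*i+1)) * (1 - X^(5*i+4))) := by
    have d1 : Disjoint (A5 ∪ B1) B4 := by
      rw [Finset.disjoint_left]
      intro x hx hx4
      simp only [hA5, hB1, hB4, Finset.mem_union, Finset.mem_image, Finset.mem_range] at hx hx4
      obtain ⟨i, _, rfl⟩ := hx4
      rcases hx with ⟨j, _, hj⟩ | ⟨j, _, hj⟩ <;> omega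
    have d2 : Disjoint A5 B1 := by
      rw [Finset.disjoint_left]
      intro x hx hx1
      simp only [hA5, hB1, Finset.mem_image, Finset.mem_range] at hx hx1
      obtain ⟨i, _, rfl⟩ := hx1
      obtain ⟨j, _, hj⟩ := hx
      omega
    rw [Finset.prod_union d1, Finset.prod_union d2]
    have e5 : ∏ n ∈ A5, (1 - (X:PS)^n) = qpochA 5 d := by
      rw [hA5, Finset.prod_image (by intro a _ b _ h; simp only at h; omega), qpochA]
    have e1 : ∏ n ∈ B1, (1 - (X:PS)^n) = ∏ i ∈ range J, (1 - (X:PS)^(5*i+1)) := by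
      rw [hB1, Finset.prod_image (by intro a _ b _ h; simp only at h; omega)]
    have e4 : ∏ n ∈ B4, (1 - (X:PS)^n) = ∏ i ∈ range J, (1 - (X:PS)^(5*i+4)) := by
      rw [hB4, Finset.prod_image (by intro a _ b _ h; simp only at h; omega)]
    rw [e5, e1, e4, Finset.prod_mul_distrib]
    ring
  have left4 : MD d (qpochA 5 d * ∏ i ∈ range J, ((1 - (X:PS)^(5*i+1)) * (1 - X^(5*i+4))))
      (Theta J) := by
    rw [star J (by omega), Finset.mul_sum, Theta]
    apply MD_sum
    intro k hk
    rw [mem_range] at hk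
    by_cases hσ : sigma ((k:ℤ)-J) ≤ d
    · have hj : |(k:ℤ) - J| ≤ d := by
        by_contra hcon
        push_neg at hcon
        exact absurd (sigma_large hcon) (by omega)
      rcases abs_le.mp hj with ⟨hj1, hj2⟩
      have hb1 : k ≤ 2*J := by omega
      have hb2 : d ≤ 2*J - k := by omega
      have hb3 : d ≤ k := by omega
      have inner := MD_Pd_mul_G (d := d) 5 (2*J) k (by norm_num) hb1 hb2 hb3
      have e : qpochA 5 d * ((-1:PS)^(k+J) * X^(sigma ((k:ℤ)-J)) * G 5 (2*J) k)
          = ((-1:PS)^(k+J) * X^(sigma ((k:ℤ)-J))) * (qpochA 5 d * G 5 (2*J) k) := by ring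
      rw [e]
      have := MD_mul (MD_refl d ((-1:PS)^(k+J) * X^(sigma ((k:ℤ)-J)))) inner
      rw [mul_one] at this
      exact this
    · push_neg at hσ
      have hdvd1 : (X:PS)^(sigma ((k:ℤ)-J)) ∣
          qpochA 5 d * ((-1:PS)^(k+J) * X^(sigma ((k:ℤ)-J)) * G 5 (2*J) k) :=
        ⟨qpochA 5 d * (-1:PS)^(k+J) * G 5 (2*J) k, by ring⟩
      have hdvd2 : (X:PS)^(sigma ((k:ℤ)-J)) ∣ (-1:PS)^(k+J) * X^(sigma ((k:ℤ)-J)) :=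
        ⟨(-1:PS)^(k+J), by ring⟩
      have hpow : (X:PS)^(d+1) ∣ (X:PS)^(sigma ((k:ℤ)-J)) :=
        pow_dvd_pow (X:PS) (by omega)
      exact MD_of_dvd_dvd (dvd_trans hpow hdvd1) (dvd_trans hpow hdvd2)
  exact MD_trans left2 (by rw [left3]; exact left4)

lemma right_chain (d : ℕ) :
    MD d (qpoch d * ∑ r ∈ Finset.range (d + 1),
      (PowerSeries.X : PowerSeries ℚ) ^ (r ^ 2 + r) * (qpoch r)⁻¹) (Theta (2*d+2)) := by
  set J := 2*d+2 with hJ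
  set nst := 10*d+8 with hnst
  -- step 1: replace the truncated sum by (qpoch d) * CC nst
  have right1 : MD d (qpoch d * ∑ r ∈ Finset.range (d + 1),
      (X:PS) ^ (r ^ 2 + r) * (qpoch r)⁻¹) (qpoch d * CC nst) := by
    rw [Finset.mul_sum, CC, Finset.mul_sum]
    have hsplit2 : ∑ r ∈ range (nst+1), qpoch d * ((X:PS)^(r^2+r) * G 1 (nst - r) r)
        = (∑ r ∈ range (d+1), qpoch d * ((X:PS)^(r^2+r) * G 1 (nst - r) r))
          + ∑ i ∈ range (9*d+8), qpoch d *
              ((X:PS)^((d+1+i)^2+(d+1+i)) * G 1 (nst - (d+1+i)) (d+1+i)) := by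
      rw [show nst + 1 = (d+1) + (9*d+8) from by omega]
      rw [Finset.sum_range_add]
    rw [hsplit2]
    have main : MD d (∑ r ∈ range (d+1), qpoch d * ((X:PS)^(r^2+r) * (qpoch r)⁻¹))
        (∑ r ∈ range (d+1), qpoch d * ((X:PS)^(r^2+r) * G 1 (nst - r) r)) := by
      apply MD_sum
      intro r hr
      rw [mem_range] at hr
      by_cases hrd : r^2 + r ≤ d
      · apply MD_cancel (u := qpoch r)
          (by rw [qpoch_eq, constantCoeff_qpochA 1 r one_pos]; norm_num)
        have hinv : qpoch r * (qpoch r)⁻¹ = 1 :=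
          PowerSeries.mul_inv_cancel _
            (by rw [qpoch_eq, constantCoeff_qpochA 1 r one_pos]; norm_num)
        have e1 : qpoch r * (qpoch d * ((X:PS)^(r^2+r) * (qpoch r)⁻¹))
            = (X:PS)^(r^2+r) * qpoch d * (qpoch r * (qpoch r)⁻¹) := by ring
        have e2 : qpoch r * (qpoch d * ((X:PS)^(r^2+r) * G 1 (nst - r) r))
            = (X:PS)^(r^2+r) * qpoch d * (G 1 (nst - r) r * qpochA 1 r) := by
          rw [qpoch_eq]; ring
        rw [e1, e2, hinv]
        apply MD_mul (MD_refl _ _)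
        exact MD_symm (MD_G_mul_poch (d := d) 1 (nst - r) r one_pos (by omega) (by omega))
      · have hdvd1 : (X:PS)^(r^2+r) ∣ qpoch d * ((X:PS)^(r^2+r) * (qpoch r)⁻¹) :=
          ⟨qpoch d * (qpoch r)⁻¹, by ring⟩
        have hdvd2 : (X:PS)^(r^2+r) ∣ qpoch d * ((X:PS)^(r^2+r) * G 1 (nst - r) r) :=
          ⟨qpoch d * G 1 (nst - r) r, by ring⟩
        have hpow : (X:PS)^(d+1) ∣ (X:PS)^(r^2+r) := pow_dvd_pow _ (by omega)
        exact MD_of_dvd_dvd (dvd_trans hpow hdvd1) (dvd_trans hpow hdvd2)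
    have extra : MD d 0
        (∑ i ∈ range (9*d+8), qpoch d *
          ((X:PS)^((d+1+i)^2+(d+1+i)) * G 1 (nst - (d+1+i)) (d+1+i))) := by
      have : MD d (∑ i ∈ range (9*d+8), (0:PS))
          (∑ i ∈ range (9*d+8), qpoch d *
            ((X:PS)^((d+1+i)^2+(d+1+i)) * G 1 (nst - (d+1+i)) (d+1+i))) := by
        apply MD_sum
        intro i _
        have hdvd : (X:PS)^((d+1+i)^2+(d+1+i)) ∣ qpoch d *
            ((X:PS)^((d+1+i)^2+(d+1+i)) * G 1 (nst - (d+1+i)) (d+1+i)) :=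
          ⟨qpoch d * G 1 (nst - (d+1+i)) (d+1+i), by ring⟩
        have hexp : d + 1 ≤ (d+1+i)^2+(d+1+i) :=
          le_trans (by omega) (Nat.le_add_left (d+1+i) ((d+1+i)^2))
        exact MD_of_dvd_dvd (dvd_zero _) (dvd_trans (pow_dvd_pow _ hexp) hdvd)
      rwa [Finset.sum_const_zero] at this
    have comb := MD_add main extra
    rwa [add_zero] at comb
  -- step 2: CC = DD, then compare with Theta
  have right2 : CC nst = DD J nst := CC_eq_DD J nst (by omega)
  have right3 : MD d (qpoch d * DD J nst) (Theta J) := by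
    rw [DD, Finset.mul_sum, Theta]
    apply MD_sum
    intro k hk
    rw [mem_range] at hk
    rw [TT]
    by_cases hσ : sigma ((k:ℤ)-J) ≤ d
    · have hj : |(k:ℤ) - J| ≤ d := by
        by_contra hcon
        push_neg at hcon
        exact absurd (sigma_large hcon) (by omega)
      rcases abs_le.mp hj with ⟨hj1, hj2⟩
      set m : ℤ := (((nst:ℕ):ℤ) - 5*((k:ℤ)-J))/2 with hm
      have hm0 : 0 ≤ m := by omega
      have hGz : Gz 1 (nst+1) m = G 1 (nst+1) m.toNat := by rw [Gz, if_pos hm0]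
      rw [hGz]
      have hb1 : m.toNat ≤ nst + 1 := by omega
      have hb2 : d ≤ (nst+1) - m.toNat := by omega
      have hb3 : d ≤ m.toNat := by omega
      have inner := MD_Pd_mul_G (d := d) 1 (nst+1) m.toNat one_pos hb1 hb2 hb3
      have e : qpoch d * ((-1:PS)^(k+J) * X^(sigma ((k:ℤ)-J)) * G 1 (nst+1) m.toNat)
          = ((-1:PS)^(k+J) * X^(sigma ((k:ℤ)-J))) * (qpochA 1 d * G 1 (nst+1) m.toNat) := by
        rw [qpoch_eq]; ring
      rw [e]
      have := MD_mul (MD_refl d ((-1:PS)^(k+J) * X^(sigma ((k:ℤ)-J)))) inner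
      rwa [mul_one] at this
    · push_neg at hσ
      have hdvd1 : (X:PS)^(sigma ((k:ℤ)-J)) ∣
          qpoch d * ((-1:PS)^(k+J) * X^(sigma ((k:ℤ)-J)) *
            Gz 1 (nst+1) ((((nst:ℕ):ℤ) - 5*((k:ℤ)-J))/2)) :=
        ⟨qpoch d * ((-1:PS)^(k+J) *
          Gz 1 (nst+1) ((((nst:ℕ):ℤ) - 5*((k:ℤ)-J))/2)), by ring⟩
      have hdvd2 : (X:PS)^(sigma ((k:ℤ)-J)) ∣ (-1:PS)^(k+J) * X^(sigma ((k:ℤ)-J)) :=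
        ⟨(-1:PS)^(k+J), by ring⟩
      have hpow : (X:PS)^(d+1) ∣ (X:PS)^(sigma ((k:ℤ)-J)) :=
        pow_dvd_pow (X:PS) (by omega)
      exact MD_of_dvd_dvd (dvd_trans hpow hdvd1) (dvd_trans hpow hdvd2)
  exact MD_trans (MD_trans right1 (by rw [right2]; exact MD_refl _ _)) right3

end RR2

/-- Second Rogers–Ramanujan identity, coefficientwise:
`∏_{n≥1, n≡±2 (mod 5)} (1-q^n)⁻¹ = ∑_{r≥0} q^{r²+r}/(q)_r`.
Factors with `n > d` and terms with `r > d` do not affect the coefficient of `q^d`. -/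
theorem rogersRamanujan_second (d : ℕ) :
    (PowerSeries.coeff (R := ℚ) d)
        (∏ n ∈ (Finset.range (d + 1)).filter (fun n => n % 5 = 2 ∨ n % 5 = 3),
          ((1 - (PowerSeries.X : PowerSeries ℚ) ^ n)⁻¹)) =
      (PowerSeries.coeff (R := ℚ) d)
        (∑ r ∈ Finset.range (d + 1),
          (PowerSeries.X : PowerSeries ℚ) ^ (r ^ 2 + r) * (qpoch r)⁻¹) := by
  have cc : constantCoeff (R := ℚ) (qpoch d) ≠ 0 := by
    rw [RR2.qpoch_eq, RR2.constantCoeff_qpochA 1 d one_pos]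
    norm_num
  have h := RR2.MD_cancel cc
    (RR2.MD_trans (RR2.left_chain d) (RR2.MD_symm (RR2.right_chain d)))
  exact RR2.MD_coeff h (le_refl d)
end

section
/- As formal power series, ∏_{n≥1, n odd} (1+q^n) = ∑_{r≥0} q^{r²}/(q²;q²)_r, where (q²;q²)_r = ∏_{j=1}^r (1-q^{2j}). -/
open PowerSeries Finset

/-! ### Auxiliary: Gaussian binomials in base q², defined by Pascal recursion -/

noncomputable def gb : ℕ → ℕ → PowerSeries ℚ
  | 0, 0 => 1
  | 0, _ + 1 => 0
  | _ + 1, 0 => 1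
  | N + 1, r + 1 => gb N (r + 1) + (PowerSeries.X : PowerSeries ℚ) ^ (2 * (N - r)) * gb N r

lemma gb_zero_left (N : ℕ) : gb N 0 = 1 := by cases N <;> rfl

lemma gb_eq_zero : ∀ N r : ℕ, N < r → gb N r = 0 := by
  intro N
  induction N with
  | zero => intro r h; match r, h with | r + 1, _ => rfl
  | succ N ih =>
    intro r h
    match r, h with
    | r + 1, h =>
      show gb N (r + 1) + _ * gb N r = 0
      rw [ih (r + 1) (by omega), ih r (by omega), mul_zero, add_zero]

/-- finite q-binomial theorem, base q², z = q -/
lemma prod_eq_sum_gb (N : ℕ) :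
    ∏ j ∈ range N, (1 + (PowerSeries.X : PowerSeries ℚ) ^ (2 * j + 1)) =
      ∑ r ∈ range (N + 1), (PowerSeries.X : PowerSeries ℚ) ^ (r ^ 2) * gb N r := by
  induction N with
  | zero => simp [gb]
  | succ N ih =>
    rw [prod_range_succ, ih, mul_add, mul_one]
    have hsplit : ∀ M : ℕ, ∑ r ∈ range (M + 1), (PowerSeries.X : PowerSeries ℚ) ^ (r ^ 2) * gb M r
        = 1 + ∑ r ∈ range M, (PowerSeries.X : PowerSeries ℚ) ^ ((r+1) ^ 2) * gb M (r+1) := by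
      intro M
      rw [Finset.sum_range_succ']
      simp [gb_zero_left, add_comm]
    have h2 : ∑ r ∈ range N, (PowerSeries.X : PowerSeries ℚ) ^ ((r+1) ^ 2) * gb N (r+1)
        = ∑ r ∈ range (N+1), (PowerSeries.X : PowerSeries ℚ) ^ ((r+1) ^ 2) * gb N (r+1) := by
      rw [Finset.sum_range_succ, gb_eq_zero N (N+1) (by omega), mul_zero, add_zero]
    have h3 : (∑ r ∈ range (N + 1), (PowerSeries.X : PowerSeries ℚ) ^ (r ^ 2) * gb N r) *
        (PowerSeries.X : PowerSeries ℚ) ^ (2 * N + 1)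
        = ∑ r ∈ range (N+1), (PowerSeries.X : PowerSeries ℚ) ^ ((r+1) ^ 2) *
            ((PowerSeries.X : PowerSeries ℚ) ^ (2 * (N - r)) * gb N r) := by
      rw [Finset.sum_mul]
      refine Finset.sum_congr rfl fun r hr => ?_
      have hr' : r ≤ N := Nat.lt_succ_iff.mp (Finset.mem_range.mp hr)
      have he : (2 * N + 1) + r ^ 2 = (r+1)^2 + 2 * (N - r) := by
        have : (r+1)^2 = r^2 + 2*r + 1 := by ring
        omega
      rw [mul_comm, ← mul_assoc, ← pow_add, he, pow_add, mul_assoc]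
    rw [h3, hsplit N, hsplit (N + 1), h2, add_assoc, ← Finset.sum_add_distrib]
    congr 1
    refine Finset.sum_congr rfl fun r _ => ?_
    show _ = _ * (gb N (r + 1) + (PowerSeries.X : PowerSeries ℚ) ^ (2 * (N - r)) * gb N r)
    ring

lemma qpochA_succ (a r : ℕ) :
    qpochA a (r + 1) = qpochA a r * (1 - (PowerSeries.X : PowerSeries ℚ) ^ (a * (r + 1))) := by
  rw [qpochA, Finset.prod_range_succ]; rfl

lemma gb_mul_qpoch : ∀ N r : ℕ, r ≤ N →
    gb N r * qpochA 2 r =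
      ∏ j ∈ Finset.Ico (N - r) N, (1 - (PowerSeries.X : PowerSeries ℚ) ^ (2 * (j + 1))) := by
  intro N
  induction N with
  | zero =>
    intro r h
    interval_cases r
    simp [gb, qpochA]
  | succ N ih =>
    intro r h
    match r with
    | 0 => simp [gb_zero_left, qpochA]
    | s + 1 =>
      have hs : s ≤ N := by omega
      show (gb N (s + 1) + (PowerSeries.X : PowerSeries ℚ) ^ (2 * (N - s)) * gb N s) *
          qpochA 2 (s + 1) = _
      rcases Nat.lt_or_ge s N with hlt | hge
      · have h1 := ih (s + 1) hlt
        have h2 := ih s hs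
        have hQ1 : ∏ j ∈ Finset.Ico (N - (s+1)) N,
            (1 - (PowerSeries.X : PowerSeries ℚ) ^ (2 * (j + 1)))
            = (1 - (PowerSeries.X : PowerSeries ℚ) ^ (2 * (N - s))) *
              ∏ j ∈ Finset.Ico (N - s) N, (1 - (PowerSeries.X : PowerSeries ℚ) ^ (2 * (j + 1))) := by
          rw [Finset.prod_eq_prod_Ico_succ_bot (by omega : N - (s+1) < N),
            (by omega : N - (s+1) + 1 = N - s)]
        have hQtop : ∏ j ∈ Finset.Ico (N + 1 - (s+1)) (N+1),
            (1 - (PowerSeries.X : PowerSeries ℚ) ^ (2 * (j + 1)))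
            = (∏ j ∈ Finset.Ico (N - s) N, (1 - (PowerSeries.X : PowerSeries ℚ) ^ (2 * (j + 1)))) *
              (1 - (PowerSeries.X : PowerSeries ℚ) ^ (2 * (N + 1))) := by
          rw [(by omega : N + 1 - (s+1) = N - s), Finset.prod_Ico_succ_top (by omega : N - s ≤ N)]
        rw [hQtop, add_mul, h1, hQ1, qpochA_succ]
        have hre : ((PowerSeries.X : PowerSeries ℚ) ^ (2*(N-s)) * gb N s) *
            (qpochA 2 s * (1 - (PowerSeries.X : PowerSeries ℚ) ^ (2*(s+1))))
            = (PowerSeries.X : PowerSeries ℚ) ^ (2*(N-s)) * (gb N s * qpochA 2 s) *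
              (1 - (PowerSeries.X : PowerSeries ℚ) ^ (2*(s+1))) := by ring
        rw [hre, h2]
        have hpow : (PowerSeries.X : PowerSeries ℚ) ^ (2 * (N + 1)) =
            (PowerSeries.X : PowerSeries ℚ) ^ (2 * (N - s)) *
            (PowerSeries.X : PowerSeries ℚ) ^ (2 * (s + 1)) := by
          rw [← pow_add]; congr 1; omega
        rw [hpow]; ring
      · have hsN : s = N := by omega
        subst hsN
        rw [gb_eq_zero s (s+1) (by omega), zero_add, Nat.sub_self, pow_zero, one_mul,
          qpochA_succ, ← mul_assoc, ih s le_rfl, Nat.sub_self,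
          (by omega : s + 1 - (s + 1) = 0), Finset.prod_Ico_succ_top (by omega : 0 ≤ s)]

lemma coeff_eq_of_dvd {d : ℕ} {f g : PowerSeries ℚ}
    (h : (PowerSeries.X : PowerSeries ℚ) ^ (d + 1) ∣ (f - g)) :
    (PowerSeries.coeff (R := ℚ) d) f = (PowerSeries.coeff (R := ℚ) d) g := by
  have h2 := PowerSeries.X_pow_dvd_iff.mp h d (Nat.lt_succ_self d)
  rw [map_sub, sub_eq_zero] at h2
  exact h2

lemma prod_sub_one_dvd {d : ℕ} (s : Finset ℕ) (f : ℕ → PowerSeries ℚ)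
    (h : ∀ i ∈ s, (PowerSeries.X : PowerSeries ℚ) ^ (d + 1) ∣ (f i - 1)) :
    (PowerSeries.X : PowerSeries ℚ) ^ (d + 1) ∣ ((∏ i ∈ s, f i) - 1) := by
  induction s using Finset.cons_induction with
  | empty => simp
  | cons a s ha ih =>
    rw [Finset.prod_cons]
    have h1 := h a (Finset.mem_cons_self a s)
    have h2 := ih fun i hi => h i (Finset.mem_cons.mpr (Or.inr hi))
    have he : f a * ∏ i ∈ s, f i - 1 = f a * ((∏ i ∈ s, f i) - 1) + (f a - 1) := by ring
    rw [he]
    exact dvd_add (Dvd.dvd.mul_left h2 _) h1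

lemma constCoeff_qpochA_two (r : ℕ) : PowerSeries.constantCoeff (R := ℚ) (qpochA 2 r) = 1 := by
  rw [qpochA, map_prod]
  refine Finset.prod_eq_one fun j _ => ?_
  simp

lemma qpochA_mul_inv (r : ℕ) : qpochA 2 r * (qpochA 2 r)⁻¹ = 1 :=
  PowerSeries.mul_inv_cancel _ (by rw [constCoeff_qpochA_two]; exact one_ne_zero)

lemma gb_eq (N r : ℕ) (h : r ≤ N) :
    gb N r = (∏ j ∈ Finset.Ico (N - r) N, (1 - (PowerSeries.X : PowerSeries ℚ) ^ (2 * (j + 1)))) *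
      (qpochA 2 r)⁻¹ := by
  calc gb N r = gb N r * (qpochA 2 r * (qpochA 2 r)⁻¹) := by rw [qpochA_mul_inv, mul_one]
    _ = (gb N r * qpochA 2 r) * (qpochA 2 r)⁻¹ := by ring
    _ = _ := by rw [gb_mul_qpoch N r h]

/-- Euler's identity (j = 0 case), coefficientwise:
`∏_{n ≥ 1 odd} (1+q^n) = ∑_{r≥0} q^{r²}/(q²;q²)_r`.
Factors with `n > d` and terms with `r > d` do not affect the coefficient of `q^d`. -/
theorem euler_odd (d : ℕ) :
    (PowerSeries.coeff (R := ℚ) d)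
        (∏ n ∈ (Finset.range (d + 1)).filter (fun n => Odd n),
          (1 + (PowerSeries.X : PowerSeries ℚ) ^ n)) =
      (PowerSeries.coeff (R := ℚ) d)
        (∑ r ∈ Finset.range (d + 1),
          (PowerSeries.X : PowerSeries ℚ) ^ (r ^ 2) * (qpochA 2 r)⁻¹) := by
  have hset : (Finset.range (d + 1)).filter (fun n => Odd n)
      = (Finset.range ((d + 1) / 2)).image (fun j => 2 * j + 1) := by
    ext n
    simp only [Finset.mem_filter, Finset.mem_range, Finset.mem_image, Nat.odd_iff]
    constructor
    · rintro ⟨h1, h2⟩; exact ⟨n / 2, by omega, by omega⟩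
    · rintro ⟨j, hj, rfl⟩; omega
  rw [hset, Finset.prod_image (fun a _ b _ hab => by omega)]
  set N := 2 * d + 2 with hN
  set m := (d + 1) / 2 with hm
  have hmN : m ≤ N := by omega
  -- Step 1: pad the product out to range N
  have step1 : (PowerSeries.coeff (R := ℚ) d)
        (∏ j ∈ range m, (1 + (PowerSeries.X : PowerSeries ℚ) ^ (2 * j + 1)))
      = (PowerSeries.coeff (R := ℚ) d)
        (∏ j ∈ range N, (1 + (PowerSeries.X : PowerSeries ℚ) ^ (2 * j + 1))) := by
    apply coeff_eq_of_dvd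
    rw [← Finset.prod_range_mul_prod_Ico _ hmN]
    have hQ : (PowerSeries.X : PowerSeries ℚ) ^ (d + 1) ∣
        ((∏ j ∈ Finset.Ico m N, (1 + (PowerSeries.X : PowerSeries ℚ) ^ (2 * j + 1))) - 1) := by
      refine prod_sub_one_dvd _ _ fun j hj => ?_
      have hj1 : m ≤ j := (Finset.mem_Ico.mp hj).1
      have he : (1 + (PowerSeries.X : PowerSeries ℚ) ^ (2 * j + 1)) - 1
          = (PowerSeries.X : PowerSeries ℚ) ^ (2 * j + 1) := by ring
      rw [he]
      exact pow_dvd_pow _ (by omega)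
    have he : (∏ j ∈ range m, (1 + (PowerSeries.X : PowerSeries ℚ) ^ (2 * j + 1))) -
        (∏ j ∈ range m, (1 + (PowerSeries.X : PowerSeries ℚ) ^ (2 * j + 1))) *
          (∏ j ∈ Finset.Ico m N, (1 + (PowerSeries.X : PowerSeries ℚ) ^ (2 * j + 1)))
        = -((∏ j ∈ range m, (1 + (PowerSeries.X : PowerSeries ℚ) ^ (2 * j + 1))) *
          ((∏ j ∈ Finset.Ico m N, (1 + (PowerSeries.X : PowerSeries ℚ) ^ (2 * j + 1))) - 1)) := by
      ring
    rw [he]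
    exact (Dvd.dvd.mul_left hQ _).neg_right
  rw [step1, prod_eq_sum_gb N, map_sum, map_sum]
  -- Step 2: drop the terms with r > d
  have step2 : ∑ r ∈ range (N + 1),
        (PowerSeries.coeff (R := ℚ) d) ((PowerSeries.X : PowerSeries ℚ) ^ (r ^ 2) * gb N r)
      = ∑ r ∈ range (d + 1),
        (PowerSeries.coeff (R := ℚ) d) ((PowerSeries.X : PowerSeries ℚ) ^ (r ^ 2) * gb N r) := by
    rw [← Finset.sum_range_add_sum_Ico _ (by omega : d + 1 ≤ N + 1)]
    have hz : ∑ r ∈ Finset.Ico (d + 1) (N + 1),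
        (PowerSeries.coeff (R := ℚ) d) ((PowerSeries.X : PowerSeries ℚ) ^ (r ^ 2) * gb N r) = 0 := by
      refine Finset.sum_eq_zero fun r hr => ?_
      have hr1 : d + 1 ≤ r := (Finset.mem_Ico.mp hr).1
      have hdvd : (PowerSeries.X : PowerSeries ℚ) ^ (d + 1) ∣
          (PowerSeries.X : PowerSeries ℚ) ^ (r ^ 2) * gb N r :=
        dvd_mul_of_dvd_left (pow_dvd_pow _ (le_trans hr1 (Nat.le_self_pow (by omega) r))) _
      exact PowerSeries.X_pow_dvd_iff.mp hdvd d (Nat.lt_succ_self d)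
    rw [hz, add_zero]
  rw [step2]
  -- Step 3: replace gb by the qpoch inverse
  refine Finset.sum_congr rfl fun r hr => ?_
  have hrd : r ≤ d := Nat.lt_succ_iff.mp (Finset.mem_range.mp hr)
  apply coeff_eq_of_dvd
  rw [gb_eq N r (by omega)]
  have hQ : (PowerSeries.X : PowerSeries ℚ) ^ (d + 1) ∣
      ((∏ j ∈ Finset.Ico (N - r) N, (1 - (PowerSeries.X : PowerSeries ℚ) ^ (2 * (j + 1)))) - 1) := by
    refine prod_sub_one_dvd _ _ fun j hj => ?_
    have hj1 : N - r ≤ j := (Finset.mem_Ico.mp hj).1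
    have he : (1 - (PowerSeries.X : PowerSeries ℚ) ^ (2 * (j + 1))) - 1
        = -((PowerSeries.X : PowerSeries ℚ) ^ (2 * (j + 1))) := by ring
    rw [he]
    exact (pow_dvd_pow _ (by omega)).neg_right
  have he : (PowerSeries.X : PowerSeries ℚ) ^ (r ^ 2) *
      ((∏ j ∈ Finset.Ico (N - r) N, (1 - (PowerSeries.X : PowerSeries ℚ) ^ (2 * (j + 1)))) *
        (qpochA 2 r)⁻¹) -
      (PowerSeries.X : PowerSeries ℚ) ^ (r ^ 2) * (qpochA 2 r)⁻¹
      = ((PowerSeries.X : PowerSeries ℚ) ^ (r ^ 2) * (qpochA 2 r)⁻¹) *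
        ((∏ j ∈ Finset.Ico (N - r) N, (1 - (PowerSeries.X : PowerSeries ℚ) ^ (2 * (j + 1)))) - 1) := by
    ring
  rw [he]
  exact Dvd.dvd.mul_left hQ _
end

section
/- The generating function for partitions of N with largest part at most n+1, at most n parts, and every successive rank equal to 1 is ∏_{j=1}^{n}(1+q^{2j}); equivalently, such partitions of N are in bijection with partitions of N into distinct even parts each at most 2n. -/
/-- Length of the `l`-th column (1-indexed) of the Ferrers diagram:
the number of parts that are `≥ l`. -/
def colLen {N : ℕ} (p : Nat.Partition N) (l : ℕ) : ℕ :=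
  (p.parts.filter (fun x => l ≤ x)).card

/-- Length of the `l`-th row (1-indexed) of the Ferrers diagram, i.e. the `l`-th
largest part: the number of columns of length `≥ l`. -/
def rowLen {N : ℕ} (p : Nat.Partition N) (l : ℕ) : ℕ :=
  ((Finset.range (N + 1)).filter (fun m => l ≤ colLen p (m + 1))).card

/-- The number of diagonal hooks (right angles) = size of the Durfee square. -/
def durfee {N : ℕ} (p : Nat.Partition N) : ℕ :=
  ((Finset.range (N + 1)).filter (fun l => l + 1 ≤ rowLen p (l + 1))).card

/-- The `l`-th successive rank (1-indexed): length of the `l`-th row minus length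
of the `l`-th column. -/
def srank {N : ℕ} (p : Nat.Partition N) (l : ℕ) : ℤ :=
  (rowLen p l : ℤ) - (colLen p l : ℤ)

open Finset

lemma downclosed_eq_range (s : Finset ℕ) (h : ∀ a ∈ s, ∀ b, b ≤ a → b ∈ s) :
    s = Finset.range s.card := by
  have hsub : s ⊆ Finset.range s.card := by
    intro x hx
    by_contra hc
    simp only [Finset.mem_range, not_lt] at hc
    have hss : Finset.range (x + 1) ⊆ s := fun b hb =>
      h x hx b (Nat.lt_succ_iff.mp (Finset.mem_range.mp hb))
    have := Finset.card_le_card hss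
    simp only [Finset.card_range] at this
    omega
  exact Finset.eq_of_subset_of_card_le hsub (by simp)

lemma count_iff {B : ℕ} {q : ℕ → Prop} [DecidablePred q]
    (hq : ∀ a b, b ≤ a → q a → q b) (hB : ∀ m, q m → m < B) (m : ℕ) :
    m < ((Finset.range B).filter q).card ↔ q m := by
  have hdc := downclosed_eq_range ((Finset.range B).filter q) (by
    intro a ha b hba
    simp only [Finset.mem_filter, Finset.mem_range] at ha ⊢
    exact ⟨lt_of_le_of_lt hba ha.1, hq a b hba ha.2⟩)
  constructor
  · intro hm
    have : m ∈ Finset.range (((Finset.range B).filter q).card) := Finset.mem_range.mpr hm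
    rw [← hdc] at this
    exact (Finset.mem_filter.mp this).2
  · intro hm
    have : m ∈ (Finset.range B).filter q :=
      Finset.mem_filter.mpr ⟨Finset.mem_range.mpr (hB m hm), hm⟩
    rw [hdc] at this
    exact Finset.mem_range.mp this

variable {N : ℕ} (p : Nat.Partition N)

lemma parts_le {x : ℕ} (hx : x ∈ p.parts) : x ≤ N := by
  have := Multiset.le_sum_of_mem hx
  rwa [p.parts_sum] at this

lemma card_parts_le : Multiset.card p.parts ≤ N := by
  calc Multiset.card p.parts = (p.parts.map (fun _ => 1)).sum := by simp
    _ ≤ p.parts.sum := Multiset.sum_map_le_sum _ (fun x hx => p.parts_pos hx)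
    _ = N := p.parts_sum

lemma colLen_anti {l l' : ℕ} (h : l ≤ l') : colLen p l' ≤ colLen p l := by
  apply Multiset.card_le_card
  apply Multiset.monotone_filter_right
  intro x hx
  exact le_trans h hx

lemma colLen_le_card (l : ℕ) : colLen p l ≤ Multiset.card p.parts :=
  Multiset.card_le_card (Multiset.filter_le _ _)

lemma colLen_eq_zero {l : ℕ} (h : N < l) : colLen p l = 0 := by
  rw [colLen, Multiset.card_eq_zero, Multiset.filter_eq_nil]
  intro x hx hc
  exact absurd (le_trans hc (parts_le p hx)) (not_le.mpr h)

lemma le_of_colLen_pos {l : ℕ} (h : 0 < colLen p l) : l ≤ N := by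
  by_contra hc
  rw [colLen_eq_zero p (not_le.mp hc)] at h
  exact absurd h (lt_irrefl 0)

lemma cell_symm (i j : ℕ) : i + 1 ≤ rowLen p (j + 1) ↔ j + 1 ≤ colLen p (i + 1) := by
  have := count_iff (B := N + 1) (q := fun m => j + 1 ≤ colLen p (m + 1))
    (fun a b hba hqa => le_trans hqa (colLen_anti p (by omega)))
    (fun m hm => by
      have := le_of_colLen_pos p (lt_of_lt_of_le (Nat.succ_pos j) hm)
      omega) i
  rw [rowLen]
  exact this

lemma rowLen_anti {l l' : ℕ} (h : l ≤ l') : rowLen p l' ≤ rowLen p l := by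
  apply Finset.card_le_card
  apply Finset.monotone_filter_right
  intro x _ hx
  exact le_trans h hx

lemma rowLen_le_N (j : ℕ) : rowLen p (j + 1) ≤ N := by
  by_contra hc
  push_neg at hc
  have h1 : (N + 1) - 1 + 1 ≤ rowLen p (j + 1) := by omega
  have := (cell_symm p N j).mp (by omega)
  have := le_of_colLen_pos p (lt_of_lt_of_le (Nat.succ_pos j) this)
  omega

lemma colLen_eq_filter (j : ℕ) :
    colLen p (j + 1) = ((Finset.range (N + 1)).filter (fun m => j + 1 ≤ rowLen p (m + 1))).card := by
  have h1 : (Finset.range (N + 1)).filter (fun m => j + 1 ≤ rowLen p (m + 1))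
      = Finset.range (colLen p (j + 1)) := by
    ext m
    simp only [Finset.mem_filter, Finset.mem_range]
    constructor
    · intro ⟨_, hm⟩
      have := (cell_symm p j m).mp hm
      omega
    · intro hm
      have hle : colLen p (j + 1) ≤ N := le_trans (colLen_le_card p _) (card_parts_le p)
      exact ⟨by omega, (cell_symm p j m).mpr (by omega)⟩
  rw [h1, Finset.card_range]

lemma count_add_colLen (x : ℕ) :
    Multiset.count (x + 1) p.parts + colLen p (x + 2) = colLen p (x + 1) := by
  classical
  have h1 : p.parts.filter (fun y => y = x + 1) + p.parts.filter (fun y => x + 2 ≤ y)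
      = p.parts.filter (fun y => y = x + 1 ∨ x + 2 ≤ y)
        + p.parts.filter (fun y => y = x + 1 ∧ x + 2 ≤ y) :=
    Multiset.filter_add_filter _ _ _
  have h2 : p.parts.filter (fun y => y = x + 1 ∨ x + 2 ≤ y) = p.parts.filter (fun y => x + 1 ≤ y) := by
    apply Multiset.filter_congr
    intro y _
    constructor
    · rintro (rfl | h) <;> omega
    · intro h; omega
  have h3 : p.parts.filter (fun y => y = x + 1 ∧ x + 2 ≤ y) = 0 := by
    rw [Multiset.filter_eq_nil]
    rintro y _ ⟨rfl, h⟩; omega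
  have h4 : Multiset.count (x + 1) p.parts = (p.parts.filter (fun y => y = x + 1)).card := by
    rw [Multiset.count, Multiset.countP_eq_card_filter]
    congr 1
    apply Multiset.filter_congr
    intro y _
    exact ⟨fun h => h.symm, fun h => h.symm⟩
  rw [colLen, colLen, h4]
  have := congrArg Multiset.card h1
  rw [Multiset.card_add, Multiset.card_add, h2, h3] at this
  simpa using this

lemma parts_eq_of_colLen {M : ℕ} (q : Nat.Partition M)
    (h : ∀ l, colLen p (l + 1) = colLen q (l + 1)) : p.parts = q.parts := by
  classical
  ext y
  rcases y with _ | x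
  · rw [Multiset.count_eq_zero_of_notMem, Multiset.count_eq_zero_of_notMem]
    · intro hm; exact absurd (q.parts_pos hm) (lt_irrefl 0)
    · intro hm; exact absurd (p.parts_pos hm) (lt_irrefl 0)
  · have hp := count_add_colLen p x
    have hq := count_add_colLen q x
    have e1 := h x
    have e2 := h (x + 1)
    have e2' : colLen p (x + 2) = colLen q (x + 2) := e2
    omega

lemma durfee_iff (l : ℕ) : l < durfee p ↔ l + 1 ≤ rowLen p (l + 1) := by
  have := count_iff (B := N + 1) (q := fun l => l + 1 ≤ rowLen p (l + 1))
    (fun a b hba hqa => le_trans (by omega) (le_trans hqa (rowLen_anti p (by omega))))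
    (fun m hm => by have := rowLen_le_N p m; omega) l
  rw [durfee]
  exact this

section Build

def gfun (f : ℕ → ℕ) (l : ℕ) : ℕ := f l + l

def rowFun (d : ℕ) (f : ℕ → ℕ) (m : ℕ) : ℕ :=
  if m < d then gfun f m + 2
  else ((Finset.range d).filter (fun l => m ≤ gfun f l)).card

def colFun (d : ℕ) (f : ℕ → ℕ) (m : ℕ) : ℕ :=
  if m < d then gfun f m + 1
  else ((Finset.range d).filter (fun l => m ≤ gfun f l + 1)).card

def bparts (d : ℕ) (f : ℕ → ℕ) : Multiset ℕ :=
  ((Multiset.range (f 0 + d + 2)).map (rowFun d f)).filter (fun x => 0 < x)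

variable {d : ℕ} {f : ℕ → ℕ}

def SDec (d : ℕ) (f : ℕ → ℕ) : Prop := ∀ l, l + 1 < d → f (l + 1) + 1 ≤ f l

lemma f_steps (hf : SDec d f) : ∀ l l', l ≤ l' → l' < d → f l' + (l' - l) ≤ f l := by
  have key : ∀ k l, l + k < d → f (l + k) + k ≤ f l := by
    intro k
    induction k with
    | zero => intro l _; simp
    | succ k ih =>
      intro l h
      have h1 := hf (l + k) (by omega)
      have h2 := ih l (by omega)
      have e : l + (k + 1) = l + k + 1 := by omega
      rw [e]
      omega
  intro l l' hll hl'
  have := key (l' - l) l (by omega)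
  rw [show l + (l' - l) = l' by omega] at this
  omega

lemma g_anti (hf : SDec d f) {l l' : ℕ} (h : l ≤ l') (h' : l' < d) :
    gfun f l' ≤ gfun f l := by
  have := f_steps hf l l' h h'
  unfold gfun
  omega

lemma g_ge (hf : SDec d f) {l : ℕ} (h : l < d) : d ≤ gfun f l + 1 := by
  have := f_steps hf l (d - 1) (by omega) (by omega)
  unfold gfun
  omega

lemma g_le (hf : SDec d f) {l : ℕ} (h : l < d) : gfun f l ≤ f 0 := by
  have := g_anti hf (Nat.zero_le l) h
  unfold gfun at this ⊢
  omega

lemma conjA (hf : SDec d f) (j : ℕ) :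
    ((Finset.range (f 0 + d + 2)).filter (fun m => j + 1 ≤ rowFun d f m)).card
      = colFun d f j := by
  by_cases hj : j < d
  · -- filter = range (g j + 1)
    have hiff : ∀ m, j + 1 ≤ rowFun d f m ↔ m ≤ gfun f j := by
      intro m
      unfold rowFun
      split_ifs with hm
      · -- m < d : both sides true
        constructor
        · intro _
          have := g_ge hf hj
          omega
        · intro _
          rcases le_or_gt m j with h | h
          · have := g_anti hf h hj
            have : j ≤ gfun f j := by unfold gfun; omega
            omega
          · have : m ≤ gfun f m := by unfold gfun; omega
            omega
      · constructor
        · intro hc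
          by_contra hgj
          push_neg at hgj
          have hsub : (Finset.range d).filter (fun l => m ≤ gfun f l) ⊆ Finset.range j := by
            intro l hl
            simp only [Finset.mem_filter, Finset.mem_range] at hl ⊢
            by_contra hlj
            push_neg at hlj
            have := g_anti hf hlj hl.1
            omega
          have := Finset.card_le_card hsub
          simp only [Finset.card_range] at this
          omega
        · intro hm'
          have hsub : Finset.range (j + 1) ⊆ (Finset.range d).filter (fun l => m ≤ gfun f l) := by
            intro l hl
            simp only [Finset.mem_range] at hl
            simp only [Finset.mem_filter, Finset.mem_range]
            have := g_anti hf (by omega : l ≤ j) hj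
            exact ⟨by omega, by omega⟩
          have := Finset.card_le_card hsub
          simp only [Finset.card_range] at this
          omega
    have hset : (Finset.range (f 0 + d + 2)).filter (fun m => j + 1 ≤ rowFun d f m)
        = Finset.range (gfun f j + 1) := by
      ext m
      simp only [Finset.mem_filter, Finset.mem_range]
      constructor
      · intro ⟨_, hm⟩
        have := (hiff m).mp hm
        omega
      · intro hm
        have hle := g_le hf hj
        exact ⟨by omega, (hiff m).mpr (by omega)⟩
    rw [hset, Finset.card_range, colFun, if_pos hj]
  · -- j ≥ d
    push_neg at hj
    have hset : (Finset.range (f 0 + d + 2)).filter (fun m => j + 1 ≤ rowFun d f m)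
        = (Finset.range d).filter (fun m => j ≤ gfun f m + 1) := by
      ext m
      simp only [Finset.mem_filter, Finset.mem_range]
      constructor
      · intro ⟨_, hm⟩
        unfold rowFun at hm
        split_ifs at hm with h
        · exact ⟨h, by omega⟩
        · have hle : ((Finset.range d).filter (fun l => m ≤ gfun f l)).card ≤ d := by
            calc _ ≤ (Finset.range d).card := Finset.card_le_card (Finset.filter_subset _ _)
            _ = d := Finset.card_range d
          omega
      · intro ⟨hm, hgm⟩
        refine ⟨by omega, ?_⟩
        unfold rowFun
        rw [if_pos hm]
        omega
    rw [hset, colFun, if_neg (by omega)]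

lemma conjB (hf : SDec d f) (m B : ℕ) (hB : ∀ k, m + 1 ≤ colFun d f k → k < B) :
    ((Finset.range B).filter (fun k => m + 1 ≤ colFun d f k)).card = rowFun d f m := by
  by_cases hm : m < d
  · have hiff : ∀ k, m + 1 ≤ colFun d f k ↔ k ≤ gfun f m + 1 := by
      intro k
      unfold colFun
      split_ifs with hk
      · constructor
        · intro _
          have := g_ge hf hm
          omega
        · intro _
          rcases le_or_gt k m with h | h
          · have := g_anti hf h hm
            have : m ≤ gfun f m := by unfold gfun; omega
            omega
          · have : k ≤ gfun f k := by unfold gfun; omega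
            omega
      · constructor
        · intro hc
          by_contra hgm
          push_neg at hgm
          have hsub : (Finset.range d).filter (fun l => k ≤ gfun f l + 1) ⊆ Finset.range m := by
            intro l hl
            simp only [Finset.mem_filter, Finset.mem_range] at hl ⊢
            by_contra hlm
            push_neg at hlm
            have := g_anti hf hlm hl.1
            omega
          have := Finset.card_le_card hsub
          simp only [Finset.card_range] at this
          omega
        · intro hk'
          have hsub : Finset.range (m + 1) ⊆ (Finset.range d).filter (fun l => k ≤ gfun f l + 1) := by
            intro l hl
            simp only [Finset.mem_range] at hl
            simp only [Finset.mem_filter, Finset.mem_range]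
            have := g_anti hf (by omega : l ≤ m) hm
            exact ⟨by omega, by omega⟩
          have := Finset.card_le_card hsub
          simp only [Finset.card_range] at this
          omega
    have hset : (Finset.range B).filter (fun k => m + 1 ≤ colFun d f k)
        = Finset.range (gfun f m + 2) := by
      ext k
      simp only [Finset.mem_filter, Finset.mem_range]
      constructor
      · intro ⟨_, hk⟩
        have := (hiff k).mp hk
        omega
      · intro hk
        have h1 : m + 1 ≤ colFun d f k := (hiff k).mpr (by omega)
        exact ⟨hB k h1, h1⟩
    rw [hset, Finset.card_range, rowFun, if_pos hm]
  · push_neg at hm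
    have hset : (Finset.range B).filter (fun k => m + 1 ≤ colFun d f k)
        = (Finset.range d).filter (fun l => m ≤ gfun f l) := by
      ext k
      simp only [Finset.mem_filter, Finset.mem_range]
      constructor
      · intro ⟨_, hk⟩
        unfold colFun at hk
        split_ifs at hk with h
        · exact ⟨h, by omega⟩
        · have hle : ((Finset.range d).filter (fun l => k ≤ gfun f l + 1)).card ≤ d := by
            calc _ ≤ (Finset.range d).card := Finset.card_le_card (Finset.filter_subset _ _)
            _ = d := Finset.card_range d
          omega
      · intro ⟨hk, hgk⟩
        have h1 : m + 1 ≤ colFun d f k := by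
          unfold colFun
          rw [if_pos hk]
          omega
        exact ⟨hB k h1, h1⟩
    rw [hset, rowFun, if_neg (by omega)]

lemma sum_two_mul_add_one (d : ℕ) : ∑ l ∈ Finset.range d, (2 * l + 1) = d * d := by
  induction d with
  | zero => simp
  | succ d ih => rw [Finset.sum_range_succ, ih]; ring

lemma bsum (hf : SDec d f) :
    (bparts d f).sum = ∑ l ∈ Finset.range d, 2 * (f l + 1) := by
  set K := f 0 + d + 2 with hK
  have hdK : d ≤ K := by omega
  -- drop the positivity filter
  have h0 : (bparts d f).sum = ((Multiset.range K).map (rowFun d f)).sum := by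
    unfold bparts
    rw [← hK]
    conv_rhs => rw [← Multiset.filter_add_not (fun x => 0 < x) ((Multiset.range K).map (rowFun d f))]
    rw [Multiset.sum_add]
    have : (((Multiset.range K).map (rowFun d f)).filter (fun x => ¬ 0 < x)).sum = 0 :=
      Multiset.sum_eq_zero (fun x hx => by
        have := (Multiset.mem_filter.mp hx).2
        omega)
    omega
  rw [h0]
  have h1 : ((Multiset.range K).map (rowFun d f)).sum = ∑ m ∈ Finset.range K, rowFun d f m := by
    rw [Finset.sum_eq_multiset_sum]
    rw [Finset.range_val]
  rw [h1]
  have hsplit : ∑ m ∈ Finset.range K, rowFun d f m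
      = ∑ m ∈ Finset.range d, rowFun d f m + ∑ m ∈ Finset.Ico d K, rowFun d f m := by
    rw [Finset.range_eq_Ico, ← Finset.sum_Ico_consecutive _ (Nat.zero_le d) hdK,
      ← Finset.range_eq_Ico]
  rw [hsplit]
  have hfirst : ∑ m ∈ Finset.range d, rowFun d f m = ∑ m ∈ Finset.range d, (gfun f m + 2) := by
    apply Finset.sum_congr rfl
    intro m hm
    rw [rowFun, if_pos (Finset.mem_range.mp hm)]
  have hsecond : ∑ m ∈ Finset.Ico d K, rowFun d f m + d * d
      = ∑ l ∈ Finset.range d, (gfun f l + 1) := by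
    have e1 : ∀ m ∈ Finset.Ico d K, rowFun d f m
        = ∑ l ∈ Finset.range d, (if m ≤ gfun f l then 1 else 0) := by
      intro m hm
      rw [rowFun, if_neg (by simp at hm; omega)]
      rw [Finset.card_filter]
    rw [Finset.sum_congr rfl e1, Finset.sum_comm]
    have e2 : ∀ l ∈ Finset.range d,
        ∑ m ∈ Finset.Ico d K, (if m ≤ gfun f l then 1 else 0) = gfun f l + 1 - d := by
      intro l hl
      simp only [Finset.mem_range] at hl
      rw [← Finset.card_filter]
      have : (Finset.Ico d K).filter (fun m => m ≤ gfun f l) = Finset.Ico d (gfun f l + 1) := by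
        ext m
        simp only [Finset.mem_filter, Finset.mem_Ico]
        have := g_le hf hl
        omega
      rw [this]
      simp [Nat.card_Ico]
    rw [Finset.sum_congr rfl e2]
    have e3 : ∑ l ∈ Finset.range d, (gfun f l + 1 - d) + d * d
        = ∑ l ∈ Finset.range d, ((gfun f l + 1 - d) + d) := by
      rw [Finset.sum_add_distrib]
      simp [Finset.sum_const, Finset.card_range, Nat.mul_comm]
    rw [e3]
    apply Finset.sum_congr rfl
    intro l hl
    have := g_ge hf (Finset.mem_range.mp hl)
    omega
  have hodd := sum_two_mul_add_one d
  have goal : ∑ m ∈ Finset.range d, (gfun f m + 2) + ∑ l ∈ Finset.range d, (gfun f l + 1)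
      = ∑ l ∈ Finset.range d, 2 * (f l + 1) + d * d := by
    rw [← Finset.sum_add_distrib]
    have : ∀ l ∈ Finset.range d, (gfun f l + 2) + (gfun f l + 1) = 2 * (f l + 1) + (2 * l + 1) := by
      intro l _
      unfold gfun
      ring
    rw [Finset.sum_congr rfl this, Finset.sum_add_distrib, hodd]
  omega

def bpartition (d : ℕ) (f : ℕ → ℕ) (hf : SDec d f) :
    Nat.Partition (∑ l ∈ Finset.range d, 2 * (f l + 1)) where
  parts := bparts d f
  parts_pos := fun h => (Multiset.mem_filter.mp h).2
  parts_sum := bsum hf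

end Build

section BuildProps

variable {d : ℕ} {f : ℕ → ℕ}

lemma card_filter_bparts (hf : SDec d f) (q : ℕ → Prop) [DecidablePred q]
    (hq : ∀ x, q x → 0 < x) :
    Multiset.card (Multiset.filter q (bparts d f))
      = ((Finset.range (f 0 + d + 2)).filter (fun m => q (rowFun d f m))).card := by
  unfold bparts
  rw [Multiset.filter_filter]
  have e : Multiset.filter (fun a => q a ∧ 0 < a)
        ((Multiset.range (f 0 + d + 2)).map (rowFun d f))
      = Multiset.filter q ((Multiset.range (f 0 + d + 2)).map (rowFun d f)) := by
    apply Multiset.filter_congr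
    intro x _
    exact ⟨fun h => h.1, fun h => ⟨h, hq x h⟩⟩
  rw [e, ← Multiset.countP_eq_card_filter, Multiset.countP_map]
  rw [Finset.card_def, Finset.filter_val, Finset.range_val]

lemma colLen_bpartition (hf : SDec d f) (j : ℕ) :
    colLen (bpartition d f hf) (j + 1) = colFun d f j := by
  show Multiset.card (Multiset.filter _ (bparts d f)) = _
  rw [card_filter_bparts hf _ (fun x hx => by omega)]
  exact conjA hf j

lemma colFun_pos (hf : SDec d f) {k : ℕ} (h : 0 < colFun d f k) :
    k ≤ f 0 + 1 ∧ 0 < d := by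
  unfold colFun at h
  split_ifs at h with hk
  · have := g_le hf hk
    unfold gfun at this
    constructor <;> omega
  · obtain ⟨l, hl⟩ := Finset.card_pos.mp h
    simp only [Finset.mem_filter, Finset.mem_range] at hl
    have := g_le hf hl.1
    constructor <;> omega

lemma f0_le_sum (hd : 0 < d) : f 0 + 1 ≤ ∑ l ∈ Finset.range d, 2 * (f l + 1) := by
  have h := Finset.single_le_sum (f := fun l => 2 * (f l + 1))
    (fun i _ => Nat.zero_le _) (Finset.mem_range.mpr hd)
  have h2 : 2 * (f 0 + 1) ≤ ∑ l ∈ Finset.range d, 2 * (f l + 1) := h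
  omega

lemma rowLen_bpartition (hf : SDec d f) (m : ℕ) :
    rowLen (bpartition d f hf) (m + 1) = rowFun d f m := by
  rw [rowLen]
  have e : (Finset.range (∑ l ∈ Finset.range d, 2 * (f l + 1) + 1)).filter
        (fun k => m + 1 ≤ colLen (bpartition d f hf) (k + 1))
      = (Finset.range (∑ l ∈ Finset.range d, 2 * (f l + 1) + 1)).filter
        (fun k => m + 1 ≤ colFun d f k) := by
    apply Finset.filter_congr
    intro k _
    rw [colLen_bpartition hf k]
  rw [e]
  apply conjB hf
  intro k hk
  have h1 := colFun_pos hf (lt_of_lt_of_le (Nat.succ_pos m) hk)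
  have h2 := f0_le_sum (f := f) h1.2
  omega

lemma durfee_bpartition (hf : SDec d f) : durfee (bpartition d f hf) = d := by
  have h2 : ∀ l, l < durfee (bpartition d f hf) ↔ l < d := by
    intro l
    rw [durfee_iff, rowLen_bpartition hf]
    unfold rowFun
    split_ifs with hl
    · simp only [iff_true, hl]
      unfold gfun
      omega
    · have : ((Finset.range d).filter (fun l' => l ≤ gfun f l')).card ≤ d := by
        calc _ ≤ (Finset.range d).card := Finset.card_le_card (Finset.filter_subset _ _)
        _ = d := Finset.card_range d
      constructor <;> intro <;> omega
  have a := h2 d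
  have b := h2 (durfee (bpartition d f hf))
  omega

lemma srank_bpartition (hf : SDec d f) :
    ∀ l, 1 ≤ l → l ≤ d → srank (bpartition d f hf) l = 1 := by
  intro l h1 h2
  obtain ⟨m, rfl⟩ : ∃ m, l = m + 1 := ⟨l - 1, by omega⟩
  rw [srank, rowLen_bpartition hf, colLen_bpartition hf]
  unfold rowFun colFun
  rw [if_pos (by omega), if_pos (by omega)]
  push_cast
  ring

lemma rowFun_pos_le (hf : SDec d f) {m : ℕ} (h : 0 < rowFun d f m) : m ≤ f 0 := by
  unfold rowFun at h
  split_ifs at h with hm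
  · have := f_steps hf 0 m (Nat.zero_le m) hm
    omega
  · obtain ⟨l, hl⟩ := Finset.card_pos.mp h
    simp only [Finset.mem_filter, Finset.mem_range] at hl
    have := g_le hf hl.1
    omega

lemma bparts_le (hf : SDec d f) {n : ℕ} (hb : ∀ l, l < d → f l + 1 ≤ n) (hd : d ≤ n) :
    ∀ x ∈ bparts d f, x ≤ n + 1 := by
  intro x hx
  obtain ⟨hx1, hx2⟩ := Multiset.mem_filter.mp hx
  obtain ⟨m, _, rfl⟩ := Multiset.mem_map.mp hx1
  unfold rowFun
  split_ifs with hm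
  · have h1 := g_le hf hm
    have h2 := hb 0 (by omega)
    unfold gfun at h1 ⊢
    omega
  · have : ((Finset.range d).filter (fun l => m ≤ gfun f l)).card ≤ d := by
      calc _ ≤ (Finset.range d).card := Finset.card_le_card (Finset.filter_subset _ _)
      _ = d := Finset.card_range d
    omega

lemma bparts_card (hf : SDec d f) {n : ℕ} (hb : ∀ l, l < d → f l + 1 ≤ n) (hd : d ≤ n) :
    Multiset.card (bparts d f) ≤ n := by
  have h1 : Multiset.card (bparts d f)
      = ((Finset.range (f 0 + d + 2)).filter (fun m => 0 < rowFun d f m)).card := by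
    have := card_filter_bparts hf (fun x => 0 < x) (fun x hx => hx)
    rw [← this]
    congr 1
    exact (Multiset.filter_eq_self.mpr (fun x hx => (Multiset.mem_filter.mp hx).2)).symm
  rcases Nat.eq_zero_or_pos d with rfl | hd0
  · rw [h1]
    have : (Finset.range (f 0 + 0 + 2)).filter (fun m => 0 < rowFun 0 f m) = ∅ := by
      apply Finset.filter_false_of_mem
      intro m _
      simp [rowFun]
    simp [this]
  · rw [h1]
    have hsub : (Finset.range (f 0 + d + 2)).filter (fun m => 0 < rowFun d f m)
        ⊆ Finset.range (f 0 + 1) := by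
      intro m hm
      simp only [Finset.mem_filter, Finset.mem_range] at hm ⊢
      have := rowFun_pos_le hf hm.2
      omega
    calc _ ≤ (Finset.range (f 0 + 1)).card := Finset.card_le_card hsub
    _ = f 0 + 1 := Finset.card_range _
    _ ≤ n := hb 0 hd0

lemma bparts_congr {f' : ℕ → ℕ} (h : ∀ l, l < d → f l = f' l) :
    bparts d f = bparts d f' := by
  rcases Nat.eq_zero_or_pos d with rfl | hd0
  · have hz : ∀ (g : ℕ → ℕ), bparts 0 g = 0 := by
      intro g
      unfold bparts
      rw [Multiset.filter_eq_nil]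
      intro x hx
      obtain ⟨m, _, rfl⟩ := Multiset.mem_map.mp hx
      simp [rowFun]
    rw [hz, hz]
  · have hrow : ∀ m, rowFun d f m = rowFun d f' m := by
      intro m
      unfold rowFun gfun
      have e : ∀ l ∈ Finset.range d, (m ≤ f l + l) = (m ≤ f' l + l) := by
        intro l hl
        rw [h l (Finset.mem_range.mp hl)]
      split_ifs with hm
      · rw [h m hm]
      · congr 1
        apply Finset.filter_congr
        intro l hl
        rw [h l (Finset.mem_range.mp hl)]
    unfold bparts
    rw [h 0 hd0]
    congr 1
    exact Multiset.map_congr rfl (fun m _ => hrow m)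

end BuildProps

section Reconstruct

variable {N : ℕ} (p : Nat.Partition N)

/-- the hook-arm data of a partition -/
def fp {N : ℕ} (p : Nat.Partition N) (l : ℕ) : ℕ := colLen p (l + 1) - l - 1

lemma diag_le (l : ℕ) (hl : l < durfee p) : l + 1 ≤ colLen p (l + 1) := by
  have h1 := (durfee_iff p l).mp hl
  exact (cell_symm p l l).mp h1

lemma fp_sdec : SDec (durfee p) (fp p) := by
  intro l hl
  have h1 := diag_le p (l + 1) hl
  have h2 := diag_le p l (by omega)
  have h3 : colLen p (l + 1 + 1) ≤ colLen p (l + 1) := colLen_anti p (by omega)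
  unfold fp
  omega


variable (hrank : ∀ l, 1 ≤ l → l ≤ durfee p → srank p l = 1)

include hrank

lemma row_eq_col (l : ℕ) (hl : l < durfee p) :
    rowLen p (l + 1) = colLen p (l + 1) + 1 := by
  have := hrank (l + 1) (by omega) (by omega)
  rw [srank] at this
  omega

lemma colLen_eq_colFun (j : ℕ) :
    colLen p (j + 1) = colFun (durfee p) (fp p) j := by
  by_cases hj : j < durfee p
  · rw [colFun, if_pos hj]
    have := diag_le p j hj
    unfold gfun fp
    omega
  · push_neg at hj
    rw [colLen_eq_filter]
    have hset : (Finset.range (N + 1)).filter (fun m => j + 1 ≤ rowLen p (m + 1))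
        = (Finset.range (durfee p)).filter (fun m => j ≤ gfun (fp p) m + 1) := by
      ext m
      simp only [Finset.mem_filter, Finset.mem_range]
      constructor
      · intro ⟨hm1, hm2⟩
        have hmd : m < durfee p := by
          by_contra hc
          push_neg at hc
          have h1 : rowLen p (m + 1) ≤ rowLen p (durfee p + 1) := rowLen_anti p (by omega)
          have h2 : ¬ (durfee p < durfee p) := lt_irrefl _
          rw [durfee_iff] at h2
          push_neg at h2
          omega
        refine ⟨hmd, ?_⟩
        have h3 := row_eq_col p hrank m hmd
        have h4 := diag_le p m hmd
        unfold gfun fp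
        omega
      · intro ⟨hm1, hm2⟩
        have h3 := row_eq_col p hrank m hm1
        have h4 := diag_le p m hm1
        have h5 : m < N + 1 := by
          have : durfee p ≤ N + 1 := by
            calc durfee p ≤ (Finset.range (N+1)).card :=
              Finset.card_le_card (Finset.filter_subset _ _)
            _ = N + 1 := Finset.card_range _
          omega
        refine ⟨h5, ?_⟩
        unfold gfun fp at hm2
        omega
    rw [hset, colFun, if_neg (by omega)]

lemma parts_eq_bparts : p.parts = bparts (durfee p) (fp p) := by
  apply parts_eq_of_colLen p (bpartition (durfee p) (fp p) (fp_sdec p))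
  intro l
  rw [colLen_bpartition, colLen_eq_colFun p hrank]

lemma N_eq_sum : N = ∑ l ∈ Finset.range (durfee p), 2 * (fp p l + 1) := by
  have h1 := p.parts_sum
  rw [parts_eq_bparts p hrank] at h1
  have h2 := bsum (fp_sdec p)
  omega

end Reconstruct
section Sorting

/-- `l`-th largest element of `S` (0-indexed), or junk. -/
def Lf (S : Finset ℕ) (l : ℕ) : ℕ := ((S.sort (· ≤ ·)).reverse).getD l 0

lemma Lf_length (S : Finset ℕ) : (S.sort (· ≤ ·)).reverse.length = S.card := by
  rw [List.length_reverse, Finset.length_sort]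

lemma Lf_pairwise (S : Finset ℕ) : (S.sort (· ≤ ·)).reverse.Pairwise (· > ·) := by
  rw [List.pairwise_reverse]
  exact List.sortedLT_iff_pairwise.mp (Finset.sortedLT_sort S)

lemma Lf_sdec (S : Finset ℕ) : SDec S.card (Lf S) := by
  intro l hl
  have hlen := Lf_length S
  have hp := List.pairwise_iff_get.mp (Lf_pairwise S)
  have h1 : Lf S l = (S.sort (· ≤ ·)).reverse.get ⟨l, by omega⟩ :=
    List.getD_eq_get _ _ ⟨l, by omega⟩
  have h2 : Lf S (l + 1) = (S.sort (· ≤ ·)).reverse.get ⟨l + 1, by omega⟩ :=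
    List.getD_eq_get _ _ ⟨l + 1, by omega⟩
  have := hp ⟨l, by omega⟩ ⟨l + 1, by omega⟩ (by simp)
  rw [h1, h2]
  omega

lemma Lf_mem (S : Finset ℕ) {l : ℕ} (h : l < S.card) : Lf S l ∈ S := by
  have hlen := Lf_length S
  have h1 : Lf S l = (S.sort (· ≤ ·)).reverse.get ⟨l, by omega⟩ :=
    List.getD_eq_get _ _ ⟨l, by omega⟩
  rw [h1]
  have := List.get_mem (S.sort (· ≤ ·)).reverse ⟨l, by omega⟩
  rw [List.mem_reverse, Finset.mem_sort] at this
  exact this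

lemma Lf_image (S : Finset ℕ) : (Finset.range S.card).image (Lf S) = S := by
  apply Finset.Subset.antisymm
  · intro x hx
    obtain ⟨l, hl, rfl⟩ := Finset.mem_image.mp hx
    exact Lf_mem S (Finset.mem_range.mp hl)
  · intro x hx
    have : x ∈ (S.sort (· ≤ ·)).reverse := by
      rw [List.mem_reverse, Finset.mem_sort]
      exact hx
    obtain ⟨i, hi⟩ := List.mem_iff_get.mp this
    apply Finset.mem_image.mpr
    refine ⟨i, Finset.mem_range.mpr (by have := i.2; have := Lf_length S; omega), ?_⟩
    rw [Lf, List.getD_eq_get _ _ i]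
    simpa using hi

lemma sdec_injOn {d : ℕ} {f : ℕ → ℕ} (hf : SDec d f) :
    ∀ x ∈ Finset.range d, ∀ y ∈ Finset.range d, f x = f y → x = y := by
  intro x hx y hy hxy
  simp only [Finset.mem_range] at hx hy
  rcases lt_trichotomy x y with h | h | h
  · have := f_steps hf x y (by omega) hy
    omega
  · exact h
  · have := f_steps hf y x (by omega) hx
    omega

lemma sum_Lf (S : Finset ℕ) (h : ℕ → ℕ) :
    ∑ l ∈ Finset.range S.card, h (Lf S l) = ∑ j ∈ S, h j := by
  conv_rhs => rw [← Lf_image S]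
  rw [Finset.sum_image (sdec_injOn (Lf_sdec S))]

lemma Lf_of_image {d : ℕ} {f : ℕ → ℕ} (hf : SDec d f) :
    ∀ l, l < d → Lf ((Finset.range d).image f) l = f l := by
  intro l hl
  set S := (Finset.range d).image f with hS
  have hcard : S.card = d := by
    rw [hS, Finset.card_image_of_injOn (sdec_injOn hf), Finset.card_range]
  set C : List ℕ := ((List.range d).map f).reverse with hC
  have hCsorted : C.Pairwise (· ≤ ·) := by
    rw [hC, List.pairwise_reverse]
    apply List.pairwise_iff_get.mpr
    intro i j hij
    have hlen : ((List.range d).map f).length = d := by simp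
    simp only [List.get_eq_getElem, List.getElem_map, List.getElem_range]
    have := f_steps hf i j (by omega) (by have := j.2; simpa using this)
    omega
  have hperm : (S.sort (· ≤ ·) : Multiset ℕ) = (C : Multiset ℕ) := by
    rw [Finset.sort_eq, hS, Finset.image_val_of_injOn]
    · rw [hC, Multiset.coe_reverse, Finset.range_val]
      rfl
    · intro x hx y hy hxy
      apply sdec_injOn hf x (by simpa using hx) y (by simpa using hy) hxy
  have heq : S.sort (· ≤ ·) = C :=
    List.Perm.eq_of_pairwise' (Finset.pairwise_sort _ _) hCsorted (Multiset.coe_eq_coe.mp hperm)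
  rw [Lf, heq, hC, List.reverse_reverse]
  have hlen : ((List.range d).map f).length = d := by simp
  rw [List.getD_eq_getElem _ _ (by omega), List.getElem_map, List.getElem_range]

end Sorting
section CongrLemmas

variable {N M : ℕ}

lemma colLen_congr (p : Nat.Partition N) (q : Nat.Partition M) (h : p.parts = q.parts) (l : ℕ) :
    colLen p l = colLen q l := by rw [colLen, colLen, h]

lemma weight_eq (p : Nat.Partition N) (q : Nat.Partition M) (h : p.parts = q.parts) : N = M := by
  rw [← p.parts_sum, ← q.parts_sum, h]

lemma rowLen_congr (p : Nat.Partition N) (q : Nat.Partition M) (h : p.parts = q.parts) (l : ℕ) :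
    rowLen p l = rowLen q l := by
  obtain rfl := weight_eq p q h
  rw [rowLen, rowLen]
  congr 1
  apply Finset.filter_congr
  intro m _
  rw [colLen_congr p q h]

lemma durfee_congr (p : Nat.Partition N) (q : Nat.Partition M) (h : p.parts = q.parts) :
    durfee p = durfee q := by
  obtain rfl := weight_eq p q h
  rw [durfee, durfee]
  congr 1
  apply Finset.filter_congr
  intro m _
  rw [rowLen_congr p q h]

lemma srank_congr (p : Nat.Partition N) (q : Nat.Partition M) (h : p.parts = q.parts) (l : ℕ) :
    srank p l = srank q l := by
  rw [srank, srank, rowLen_congr p q h, colLen_congr p q h]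

end CongrLemmas

section MainEquiv

def wS (S : Finset ℕ) : ℕ := ∑ j ∈ S, 2 * (j + 1)

def FN (n N : ℕ) : Finset (Finset ℕ) :=
  ((Finset.range n).powerset).filter (fun S => wS S = N)

def ofS {N : ℕ} (S : Finset ℕ) (h : wS S = N) : Nat.Partition N where
  parts := bparts S.card (Lf S)
  parts_pos := fun hx => (Multiset.mem_filter.mp hx).2
  parts_sum := by
    rw [bsum (Lf_sdec S), ← h, wS]
    exact sum_Lf S (fun j => 2 * (j + 1))

lemma ofS_parts {N : ℕ} (S : Finset ℕ) (h : wS S = N) :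
    (ofS S h).parts = (bpartition S.card (Lf S) (Lf_sdec S)).parts := rfl

variable (n : ℕ)

lemma ofS_cond {N : ℕ} (S : Finset ℕ) (hw : wS S = N) (hsub : S ⊆ Finset.range n) :
    (∀ x ∈ (ofS S hw).parts, x ≤ n + 1) ∧ Multiset.card (ofS S hw).parts ≤ n ∧
      ∀ l, 1 ≤ l → l ≤ durfee (ofS S hw) → srank (ofS S hw) l = 1 := by
  have hb : ∀ l, l < S.card → Lf S l + 1 ≤ n := by
    intro l hl
    have := Finset.mem_range.mp (hsub (Lf_mem S hl))
    omega
  have hd : S.card ≤ n := by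
    have := Finset.card_le_card hsub
    simpa using this
  refine ⟨bparts_le (Lf_sdec S) hb hd, bparts_card (Lf_sdec S) hb hd, ?_⟩
  intro l h1 h2
  have hd' : durfee (ofS S hw) = S.card :=
    (durfee_congr _ _ (ofS_parts S hw)).trans (durfee_bpartition (Lf_sdec S))
  rw [srank_congr _ _ (ofS_parts S hw)]
  exact srank_bpartition (Lf_sdec S) l h1 (by omega)

def toS {N : ℕ} (p : Nat.Partition N) : Finset ℕ := (Finset.range (durfee p)).image (fp p)

lemma toS_mem {N : ℕ} (p : Nat.Partition N) (hcard : Multiset.card p.parts ≤ n)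
    (hrank : ∀ l, 1 ≤ l → l ≤ durfee p → srank p l = 1) : toS p ∈ FN n N := by
  rw [FN, Finset.mem_filter, Finset.mem_powerset]
  constructor
  · intro x hx
    obtain ⟨l, hl, rfl⟩ := Finset.mem_image.mp (by exact hx)
    rw [Finset.mem_range] at hl ⊢
    have ha := diag_le p l hl
    have hb := colLen_le_card p (l + 1)
    unfold fp
    omega
  · rw [wS, toS, Finset.sum_image (sdec_injOn (fp_sdec p))]
    exact (N_eq_sum p hrank).symm

lemma parts_ofS_toS {N : ℕ} (p : Nat.Partition N)
    (hrank : ∀ l, 1 ≤ l → l ≤ durfee p → srank p l = 1) (hw : wS (toS p) = N) :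
    (ofS (toS p) hw).parts = p.parts := by
  show bparts (toS p).card (Lf (toS p)) = p.parts
  have hc : (toS p).card = durfee p := by
    rw [toS, Finset.card_image_of_injOn (sdec_injOn (fp_sdec p)), Finset.card_range]
  rw [hc, toS]
  rw [bparts_congr (f' := fp p) (Lf_of_image (fp_sdec p))]
  exact (parts_eq_bparts p hrank).symm

lemma toS_ofS {N : ℕ} (S : Finset ℕ) (hw : wS S = N) : toS (ofS S hw) = S := by
  have hd : durfee (ofS S hw) = S.card :=
    (durfee_congr _ _ (ofS_parts S hw)).trans (durfee_bpartition (Lf_sdec S))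
  rw [toS, hd]
  have hfp : ∀ l ∈ Finset.range S.card, fp (ofS S hw) l = Lf S l := by
    intro l hl
    rw [Finset.mem_range] at hl
    rw [fp, colLen_congr _ _ (ofS_parts S hw), colLen_bpartition (Lf_sdec S), colFun,
      if_pos hl]
    unfold gfun
    omega
  rw [Finset.image_congr (fun x hx => hfp x (by simpa using hx))]
  exact Lf_image S

lemma card_conds (N : ℕ) :
    Nat.card {p : Nat.Partition N //
      (∀ x ∈ p.parts, x ≤ n + 1) ∧ Multiset.card p.parts ≤ n ∧
      ∀ l, 1 ≤ l → l ≤ durfee p → srank p l = 1} = (FN n N).card := by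
  rw [← Fintype.card_coe (FN n N), ← Nat.card_eq_fintype_card]
  apply Nat.card_congr
  refine ⟨fun ps => ⟨toS ps.1, toS_mem n ps.1 ps.2.2.1 ps.2.2.2⟩,
    fun Ss => ⟨ofS Ss.1 (Finset.mem_filter.mp Ss.2).2,
      ofS_cond n Ss.1 (Finset.mem_filter.mp Ss.2).2
        (Finset.mem_powerset.mp (Finset.mem_filter.mp Ss.2).1)⟩, ?_, ?_⟩
  · intro ps
    apply Subtype.ext
    apply Nat.Partition.ext
    exact parts_ofS_toS ps.1 ps.2.2.2
      ((Finset.mem_filter.mp (toS_mem n ps.1 ps.2.2.1 ps.2.2.2)).2)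
  · intro Ss
    exact Subtype.ext (toS_ofS Ss.1 ((Finset.mem_filter.mp Ss.2).2))

end MainEquiv
section Evens

def ofS2 {N : ℕ} (S : Finset ℕ) (h : wS S = N) : Nat.Partition N where
  parts := S.val.map (fun j => 2 * (j + 1))
  parts_pos := by
    intro x hx
    obtain ⟨j, _, rfl⟩ := Multiset.mem_map.mp hx
    omega
  parts_sum := by rw [← h, wS, Finset.sum_eq_multiset_sum]

lemma ofS2_cond {n N : ℕ} (S : Finset ℕ) (hw : wS S = N) (hsub : S ⊆ Finset.range n) :
    (ofS2 S hw).parts.Nodup ∧ ∀ x ∈ (ofS2 S hw).parts, Even x ∧ x ≤ 2 * n := by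
  constructor
  · exact S.nodup.map (fun a b hab => by omega)
  · intro x hx
    obtain ⟨j, hj, rfl⟩ := Multiset.mem_map.mp hx
    have : j < n := Finset.mem_range.mp (hsub hj)
    exact ⟨⟨j + 1, by ring⟩, by omega⟩

def toS2 {N : ℕ} (q : Nat.Partition N) : Finset ℕ :=
  q.parts.toFinset.image (fun x => x / 2 - 1)

lemma toS2_mem {n N : ℕ} (q : Nat.Partition N) (hnd : q.parts.Nodup)
    (hev : ∀ x ∈ q.parts, Even x ∧ x ≤ 2 * n) : toS2 q ∈ FN n N := by
  have hmem : ∀ x ∈ q.parts.toFinset, x ∈ q.parts := fun x hx => Multiset.mem_toFinset.mp hx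
  rw [FN, Finset.mem_filter, Finset.mem_powerset]
  constructor
  · intro j hj
    obtain ⟨y, hy, rfl⟩ := Finset.mem_image.mp (by exact hj)
    have h1 := hev y (hmem y hy)
    obtain ⟨⟨k, hk⟩, h2⟩ := h1
    have h3 := q.parts_pos (hmem y hy)
    rw [Finset.mem_range]
    omega
  · rw [wS, toS2, Finset.sum_image]
    rotate_left
    · intro x hx y hy hxy
      obtain ⟨⟨a, ha⟩, _⟩ := hev x (hmem x hx)
      obtain ⟨⟨b, hb⟩, _⟩ := hev y (hmem y hy)
      have hx0 := q.parts_pos (hmem x hx)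
      have hy0 := q.parts_pos (hmem y hy)
      simp only at hxy
      omega
    have e : ∀ y ∈ q.parts.toFinset, 2 * (y / 2 - 1 + 1) = y := by
      intro y hy
      obtain ⟨⟨a, ha⟩, _⟩ := hev y (hmem y hy)
      have := q.parts_pos (hmem y hy)
      omega
    rw [Finset.sum_congr rfl e]
    rw [Finset.sum_eq_multiset_sum, Multiset.toFinset_val, Multiset.dedup_eq_self.mpr hnd, Multiset.map_id']
    exact q.parts_sum

lemma parts_ofS2_toS2 {n N : ℕ} (q : Nat.Partition N) (hnd : q.parts.Nodup)
    (hev : ∀ x ∈ q.parts, Even x ∧ x ≤ 2 * n) (hw : wS (toS2 q) = N) :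
    (ofS2 (toS2 q) hw).parts = q.parts := by
  have hl : ((toS2 q).val.map (fun j => 2 * (j + 1))).Nodup :=
    (toS2 q).nodup.map (fun a b hab => by omega)
  rw [show (ofS2 (toS2 q) hw).parts = (toS2 q).val.map (fun j => 2 * (j + 1)) from rfl]
  rw [Multiset.Nodup.ext hl hnd]
  intro a
  constructor
  · intro ha
    obtain ⟨j, hj, rfl⟩ := Multiset.mem_map.mp ha
    have hj' : j ∈ toS2 q := hj
    obtain ⟨y, hy, rfl⟩ := Finset.mem_image.mp hj'
    have hy' : y ∈ q.parts := Multiset.mem_toFinset.mp hy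
    obtain ⟨⟨k, hk⟩, _⟩ := hev y hy'
    have h0 := q.parts_pos hy'
    have : 2 * (y / 2 - 1 + 1) = y := by omega
    rwa [this]
  · intro ha
    apply Multiset.mem_map.mpr
    refine ⟨a / 2 - 1, ?_, ?_⟩
    · have : a / 2 - 1 ∈ toS2 q :=
        Finset.mem_image.mpr ⟨a, Multiset.mem_toFinset.mpr ha, rfl⟩
      exact this
    · obtain ⟨⟨k, hk⟩, _⟩ := hev a ha
      have := q.parts_pos ha
      omega

lemma toS2_ofS2 {N : ℕ} (S : Finset ℕ) (hw : wS S = N) : toS2 (ofS2 S hw) = S := by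
  ext j
  rw [toS2]
  simp only [Finset.mem_image, Multiset.mem_toFinset]
  constructor
  · rintro ⟨x, hx, rfl⟩
    obtain ⟨i, hi, rfl⟩ := Multiset.mem_map.mp hx
    have : 2 * (i + 1) / 2 - 1 = i := by omega
    rwa [this]
  · intro hj
    refine ⟨2 * (j + 1), Multiset.mem_map.mpr ⟨j, hj, rfl⟩, by omega⟩

lemma card_evens (n N : ℕ) :
    Nat.card {p : Nat.Partition N //
      p.parts.Nodup ∧ ∀ x ∈ p.parts, Even x ∧ x ≤ 2 * n} = (FN n N).card := by
  rw [← Fintype.card_coe (FN n N), ← Nat.card_eq_fintype_card]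
  apply Nat.card_congr
  refine ⟨fun ps => ⟨toS2 ps.1, toS2_mem ps.1 ps.2.1 ps.2.2⟩,
    fun Ss => ⟨ofS2 Ss.1 (Finset.mem_filter.mp Ss.2).2,
      ofS2_cond Ss.1 (Finset.mem_filter.mp Ss.2).2
        (Finset.mem_powerset.mp (Finset.mem_filter.mp Ss.2).1)⟩, ?_, ?_⟩
  · intro ps
    apply Subtype.ext
    apply Nat.Partition.ext
    exact parts_ofS2_toS2 ps.1 ps.2.1 ps.2.2
      ((Finset.mem_filter.mp (toS2_mem ps.1 ps.2.1 ps.2.2)).2)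
  · intro Ss
    exact Subtype.ext (toS2_ofS2 Ss.1 ((Finset.mem_filter.mp Ss.2).2))

end Evens

section PSeries

lemma prod_eq_sum_powerset (n : ℕ) :
    (∏ j ∈ Finset.range n, (1 + (PowerSeries.X : PowerSeries ℚ) ^ (2 * (j + 1))))
      = ∑ S ∈ (Finset.range n).powerset, (PowerSeries.X : PowerSeries ℚ) ^ (wS S) := by
  rw [Finset.prod_add]
  simp only [Finset.prod_const_one, one_mul, Finset.prod_pow_eq_pow_sum]
  apply Finset.sum_nbij' (i := fun t => Finset.range n \ t) (j := fun t => Finset.range n \ t)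
  · intro a _
    exact Finset.mem_powerset.mpr (Finset.sdiff_subset)
  · intro a _
    exact Finset.mem_powerset.mpr (Finset.sdiff_subset)
  · intro a ha
    rw [Finset.sdiff_sdiff_self_left, Finset.inter_eq_right.mpr (Finset.mem_powerset.mp ha)]
  · intro a ha
    rw [Finset.sdiff_sdiff_self_left, Finset.inter_eq_right.mpr (Finset.mem_powerset.mp ha)]
  · intro a _
    rfl

lemma coeff_FN (n N : ℕ) :
    (PowerSeries.coeff (R := ℚ) N)
      (∏ j ∈ Finset.range n, (1 + (PowerSeries.X : PowerSeries ℚ) ^ (2 * (j + 1))))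
      = ((FN n N).card : ℚ) := by
  rw [prod_eq_sum_powerset, map_sum]
  simp only [PowerSeries.coeff_X_pow]
  have e : (Finset.range n).powerset.filter (fun S => N = wS S) = FN n N := by
    rw [FN]
    apply Finset.filter_congr
    intro S _
    exact ⟨fun h => h.symm, fun h => h.symm⟩
  rw [Finset.sum_boole, e]

end PSeries

/-- Partitions of `N` with largest part at most `n+1`, at most `n` parts, and every
successive rank equal to `1` have generating function `∏_{j=1}^n (1 + q^{2j})`;
equivalently they are equinumerous with partitions of `N` into distinct even parts
each at most `2n`. -/
theorem rankOne_box (n : ℕ) :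
    PowerSeries.mk (fun N =>
        (Nat.card {p : Nat.Partition N //
          (∀ x ∈ p.parts, x ≤ n + 1) ∧ Multiset.card p.parts ≤ n ∧
          ∀ l, 1 ≤ l → l ≤ durfee p → srank p l = 1} : ℚ)) =
      (∏ j ∈ Finset.range n, (1 + (PowerSeries.X : PowerSeries ℚ) ^ (2 * (j + 1)))) ∧
    ∀ N : ℕ,
      Nat.card {p : Nat.Partition N //
        (∀ x ∈ p.parts, x ≤ n + 1) ∧ Multiset.card p.parts ≤ n ∧
        ∀ l, 1 ≤ l → l ≤ durfee p → srank p l = 1} =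
      Nat.card {p : Nat.Partition N //
        p.parts.Nodup ∧ ∀ x ∈ p.parts, Even x ∧ x ≤ 2 * n} := by
  constructor
  · apply PowerSeries.ext
    intro N
    rw [PowerSeries.coeff_mk, card_conds n N]
    exact (coeff_FN n N).symm
  · intro N
    rw [card_conds n N, card_evens n N]
end
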